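/- arXiv:2005.04615 — 4 statements merged into one kernel-verified Lean document; each statement's English description precedes it below -/
import Mathlib

section
/- (Lyapunov–Schmidt reduction) Let φ : ℝⁿ × ℝ → ℝⁿ be C², φ(x₀,0) = 0, L := D_xφ(x₀,0), with dim ker L = k > 0. Choose complements N(L)^⊥ of ker L and R(L)^⊥ of range L, and let p be the projection onto R(L) along R(L)^⊥. Then there exist neighborhoods A of (0,0) in ker L × ℝ and B of 0 in N(L)^⊥, and a C² map η : A → B with η(0,0) = 0, such that for each (ξ,ε) ∈ A, η(ξ,ε) is the unique element of B satisfying p·φ(ξ + η(ξ,ε) + x₀, ε) = 0. -/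
/-- Lyapunov–Schmidt reduction: for a `C²` map `φ : ℝⁿ × ℝ → ℝⁿ` with
`φ(x₀,0) = 0` and `L = D_xφ(x₀,0)` having nontrivial kernel, after choosing a
complement `N` of `ker L` and a projection `p` onto `range L`, there are
neighborhoods `A` of `(0,0)` and `B` of `0` and a `C²` map `η` with
`η(0,0) = 0` such that `η(ξ,ε)` is the unique element of `B ∩ N` solving
`p·φ(ξ + η(ξ,ε) + x₀, ε) = 0`. -/
theorem lyapunov_schmidt_reduction
    (n : ℕ) (φ : (Fin n → ℝ) × ℝ → (Fin n → ℝ)) (hφ : ContDiff ℝ 2 φ)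
    (x₀ : Fin n → ℝ) (hx₀ : φ (x₀, 0) = 0)
    (L : (Fin n → ℝ) →L[ℝ] (Fin n → ℝ))
    (hL : L = fderiv ℝ (fun x => φ (x, 0)) x₀)
    (hker : 0 < Module.finrank ℝ (LinearMap.ker (L : (Fin n → ℝ) →ₗ[ℝ] (Fin n → ℝ))))
    (N : Submodule ℝ (Fin n → ℝ)) (hN : IsCompl (LinearMap.ker (L : (Fin n → ℝ) →ₗ[ℝ] (Fin n → ℝ))) N)
    (R' : Submodule ℝ (Fin n → ℝ)) (hR' : IsCompl (LinearMap.range (L : (Fin n → ℝ) →ₗ[ℝ] (Fin n → ℝ))) R')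
    (p : (Fin n → ℝ) →ₗ[ℝ] (Fin n → ℝ))
    (hp_range : LinearMap.range p = LinearMap.range (L : (Fin n → ℝ) →ₗ[ℝ] (Fin n → ℝ)))
    (hp_ker : LinearMap.ker p = R')
    (hp_id : ∀ x ∈ LinearMap.range (L : (Fin n → ℝ) →ₗ[ℝ] (Fin n → ℝ)), p x = x) :
    ∃ A ∈ nhds ((0 : Fin n → ℝ), (0 : ℝ)), ∃ B ∈ nhds (0 : Fin n → ℝ),
      ∃ η : (Fin n → ℝ) × ℝ → (Fin n → ℝ),
        ContDiffOn ℝ 2 η A ∧ η (0, 0) = 0 ∧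
        ∀ ξε ∈ A, ξε.1 ∈ LinearMap.ker (L : (Fin n → ℝ) →ₗ[ℝ] (Fin n → ℝ)) →
          η ξε ∈ B ∧ η ξε ∈ N ∧
          p (φ (ξε.1 + η ξε + x₀, ξε.2)) = 0 ∧
          ∀ y ∈ B, y ∈ N → p (φ (ξε.1 + y + x₀, ξε.2)) = 0 → y = η ξε := by
  -- kernel projection
  set K : Submodule ℝ (Fin n → ℝ) := LinearMap.ker (L : (Fin n → ℝ) →ₗ[ℝ] (Fin n → ℝ)) with hK
  have hrk : Module.finrank ℝ K = Module.finrank ℝ R' := by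
    have h1 := LinearMap.finrank_range_add_finrank_ker (L : (Fin n → ℝ) →ₗ[ℝ] (Fin n → ℝ))
    have h2 := Submodule.finrank_add_eq_of_isCompl hR'
    have : LinearMap.range (L : (Fin n → ℝ) →ₗ[ℝ] (Fin n → ℝ)) = LinearMap.range (L : (Fin n → ℝ) →ₗ[ℝ] (Fin n → ℝ)) := by
      ext x; simp [LinearMap.mem_range, ContinuousLinearMap.coe_coe]
    rw [this] at h1
    have : LinearMap.ker (L : (Fin n → ℝ) →ₗ[ℝ] (Fin n → ℝ)) = K := rfl
    rw [this] at h1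
    exact Nat.add_left_cancel (h1.trans h2.symm)
  set e : K ≃ₗ[ℝ] R' := LinearEquiv.ofFinrankEq _ _ hrk with he
  set πK' : (Fin n → ℝ) →ₗ[ℝ] K := K.linearProjOfIsCompl N hN with hπK'
  set J : (Fin n → ℝ) →L[ℝ] (Fin n → ℝ) := (R'.subtype ∘ₗ (e : K →ₗ[ℝ] R') ∘ₗ πK').toContinuousLinearMap with hJ
  set pc : (Fin n → ℝ) →L[ℝ] (Fin n → ℝ) := p.toContinuousLinearMap with hpc
  set g : (Fin n → ℝ) × ℝ → (Fin n → ℝ) × ℝ := fun z => (J z.1 + pc (φ (z.1 + x₀, z.2)), z.2) with hg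
  have hgC : ContDiff ℝ 2 g := by
    apply ContDiff.prodMk
    · exact (J.contDiff.comp contDiff_fst).add
        (pc.contDiff.comp (hφ.comp ((contDiff_fst.add contDiff_const).prodMk contDiff_snd)))
    · exact contDiff_snd
  -- the derivative of φ at (x₀, 0)
  set D : (Fin n → ℝ) × ℝ →L[ℝ] (Fin n → ℝ) := fderiv ℝ φ (x₀, 0) with hDdef
  have hD : HasFDerivAt φ D (x₀, 0) :=
    (hφ.differentiable (by norm_num)).differentiableAt.hasFDerivAt
  have hLD : ∀ v, L v = D (v, 0) := by
    intro v
    have hinl : HasFDerivAt (fun x : (Fin n → ℝ) => (x, (0 : ℝ)))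
        (ContinuousLinearMap.inl ℝ (Fin n → ℝ) ℝ) x₀ := (ContinuousLinearMap.inl ℝ (Fin n → ℝ) ℝ).hasFDerivAt
    have hcomp : HasFDerivAt (fun x : (Fin n → ℝ) => φ (x, 0))
        (D.comp (ContinuousLinearMap.inl ℝ (Fin n → ℝ) ℝ)) x₀ := hD.comp x₀ hinl
    have : fderiv ℝ (fun x : (Fin n → ℝ) => φ (x, 0)) x₀ = D.comp (ContinuousLinearMap.inl ℝ (Fin n → ℝ) ℝ) :=
      hcomp.fderiv
    rw [hL, this]
    rfl
  -- the derivative of g at (0,0)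
  set T : (Fin n → ℝ) × ℝ →L[ℝ] (Fin n → ℝ) × ℝ :=
    ((J.comp (ContinuousLinearMap.fst ℝ (Fin n → ℝ) ℝ)) + (pc.comp D)).prod
      (ContinuousLinearMap.snd ℝ (Fin n → ℝ) ℝ) with hT
  have hgT : HasFDerivAt g T (0, 0) := by
    have htr : HasFDerivAt (fun z : (Fin n → ℝ) × ℝ => z + (x₀, (0:ℝ)))
        (ContinuousLinearMap.id ℝ ((Fin n → ℝ) × ℝ)) ((0,0) : (Fin n → ℝ) × ℝ) := (hasFDerivAt_id _).add_const _
    have hφ2 : HasFDerivAt (fun z : (Fin n → ℝ) × ℝ => φ (z + (x₀, (0:ℝ)))) D ((0,0) : (Fin n → ℝ) × ℝ) := by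
      have h0 : HasFDerivAt φ D (((0,0) : (Fin n → ℝ) × ℝ) + (x₀, 0)) := by
        simpa using hD
      have := h0.comp ((0,0) : (Fin n → ℝ) × ℝ) htr
      simpa using this
    have h1 : HasFDerivAt (fun z : (Fin n → ℝ) × ℝ => J z.1 + pc (φ (z + (x₀, (0:ℝ)))))
        ((J.comp (ContinuousLinearMap.fst ℝ (Fin n → ℝ) ℝ)) + (pc.comp D)) ((0,0) : (Fin n → ℝ) × ℝ) :=
      ((J.comp (ContinuousLinearMap.fst ℝ (Fin n → ℝ) ℝ)).hasFDerivAt).add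
        (pc.hasFDerivAt.comp _ hφ2)
    have h2 : HasFDerivAt (fun z : (Fin n → ℝ) × ℝ => z.2) (ContinuousLinearMap.snd ℝ (Fin n → ℝ) ℝ) ((0,0) : (Fin n → ℝ) × ℝ) :=
      (ContinuousLinearMap.snd ℝ (Fin n → ℝ) ℝ).hasFDerivAt
    have := h1.prodMk h2
    apply this.congr_of_eventuallyEq
    filter_upwards with z
    have hz : z + ((x₀, (0:ℝ)) : (Fin n → ℝ) × ℝ) = (z.1 + x₀, z.2) := by
      ext <;> simp
    show g z = (J z.1 + pc (φ (z + (x₀, (0:ℝ)))), z.2)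
    rw [hz]
  -- T is bijective
  have hdisj : ∀ x : Fin n → ℝ, x ∈ LinearMap.range (L : (Fin n → ℝ) →ₗ[ℝ] (Fin n → ℝ)) → x ∈ R' → x = 0 := by
    intro x hx hx'
    exact (Submodule.disjoint_def.mp hR'.disjoint) x hx hx'
  have hJmem : ∀ v : Fin n → ℝ, J v ∈ R' := by
    intro v
    simp only [hJ, LinearMap.coe_toContinuousLinearMap', LinearMap.coe_comp,
      Function.comp_apply]
    exact (e (πK' v)).2
  have hJval : ∀ v : Fin n → ℝ, J v = R'.subtype (e (πK' v)) := fun v => rfl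
  have hT0 : ∀ z : (Fin n → ℝ) × ℝ, T z = 0 → z = 0 := by
    rintro ⟨v, t⟩ hz
    have ht : t = 0 := congrArg Prod.snd hz
    have h1 : J v + pc (D (v, t)) = 0 := congrArg Prod.fst hz
    rw [ht] at h1
    have hDv : D (v, 0) = L v := (hLD v).symm
    have hpcL : pc (L v) = L v := hp_id (L v) (LinearMap.mem_range_self _ v)
    rw [hDv, hpcL] at h1
    have hLv0 : L v = 0 := by
      have hmem : L v ∈ R' := by
        have : L v = -(J v) := by linear_combination h1
        rw [this]; exact neg_mem (hJmem v)
      exact hdisj (L v) (LinearMap.mem_range_self _ v) hmem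
    have hJv0 : J v = 0 := by rw [← h1, hLv0, add_zero]
    have hπ0 : πK' v = 0 := by
      have : R'.subtype (e (πK' v)) = 0 := by rw [← hJval]; exact hJv0
      have he0 : e (πK' v) = 0 := by
        exact Subtype.ext_iff.mpr this
      exact e.injective (by rw [he0, map_zero])
    have hvK : v ∈ K := hLv0
    have : πK' v = ⟨v, hvK⟩ := Submodule.linearProjOfIsCompl_apply_left hN ⟨v, hvK⟩
    have hv0 : v = 0 := by
      have := this.symm.trans hπ0
      exact congrArg Subtype.val this
    exact Prod.ext hv0 ht
  have hTbij : Function.Bijective (T : ((Fin n → ℝ) × ℝ) →ₗ[ℝ] ((Fin n → ℝ) × ℝ)) := by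
    have hinj : Function.Injective (T : ((Fin n → ℝ) × ℝ) →ₗ[ℝ] ((Fin n → ℝ) × ℝ)) := by
      rw [← LinearMap.ker_eq_bot, LinearMap.ker_eq_bot']
      intro z hz
      exact hT0 z hz
    exact ⟨hinj, (LinearMap.injective_iff_surjective).mp hinj⟩
  set T' : ((Fin n → ℝ) × ℝ) ≃L[ℝ] ((Fin n → ℝ) × ℝ) :=
    (LinearEquiv.ofBijective (T : ((Fin n → ℝ) × ℝ) →ₗ[ℝ] ((Fin n → ℝ) × ℝ)) hTbij).toContinuousLinearEquiv with hT'
  have hT'coe : (T' : ((Fin n → ℝ) × ℝ) →L[ℝ] ((Fin n → ℝ) × ℝ)) = T := by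
    apply ContinuousLinearMap.ext
    intro z
    rfl
  have hgT' : HasFDerivAt g (T' : ((Fin n → ℝ) × ℝ) →L[ℝ] ((Fin n → ℝ) × ℝ)) (0, 0) := by
    rw [hT'coe]; exact hgT
  have h12 : (2 : WithTop ℕ∞) ≠ 0 := by norm_num
  set Ψ := hgC.contDiffAt.toOpenPartialHomeomorph g hgT' h12 with hΨ
  have hΨcoe : ⇑Ψ = g := rfl
  have hg00 : g (0, 0) = (0, 0) := by
    simp [hg, hx₀]
  have hsrc : ((0,0) : (Fin n → ℝ) × ℝ) ∈ Ψ.source :=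
    hgC.contDiffAt.mem_toOpenPartialHomeomorph_source hgT' h12
  have htgt : ((0,0) : (Fin n → ℝ) × ℝ) ∈ Ψ.target := by
    have := hgC.contDiffAt.image_mem_toOpenPartialHomeomorph_target hgT' h12
    rwa [hg00] at this
  have hsymm00 : Ψ.symm (0,0) = (0,0) := by
    have := Ψ.left_inv hsrc
    rwa [hΨcoe, hg00] at this
  have hsymmC : ContDiffAt ℝ 2 Ψ.symm ((0,0) : (Fin n → ℝ) × ℝ) := by
    have h := hgC.contDiffAt.to_localInverse (f' := T') hgT' h12
    rw [hg00] at h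
    exact h
  -- get a neighborhood on which Ψ.symm is C²
  obtain ⟨u, hu_nhds, hu_cd⟩ := hsymmC.contDiffOn (le_refl _) (by norm_num)
  -- an open neighborhood of (0,0) inside u ∩ Ψ.target
  obtain ⟨u₀, hu₀sub, hu₀open, hu₀mem⟩ :=
    mem_nhds_iff.mp (Filter.inter_mem hu_nhds (Ψ.open_target.mem_nhds htgt))
  -- radius for the source ball
  obtain ⟨r, hr_pos, hr_sub⟩ := Metric.mem_nhds_iff.mp (Ψ.open_source.mem_nhds hsrc)
  -- the candidate implicit function
  set m : (Fin n → ℝ) × ℝ → (Fin n → ℝ) × ℝ := fun z => (J z.1, z.2) with hm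
  have hmC : ContDiff ℝ 2 m := (J.contDiff.comp contDiff_fst).prodMk contDiff_snd
  set πKc : (Fin n → ℝ) →L[ℝ] (Fin n → ℝ) := (K.subtype ∘ₗ πK').toContinuousLinearMap with hπKc
  set η : (Fin n → ℝ) × ℝ → (Fin n → ℝ) := fun z => (Ψ.symm (m z)).1 - πKc z.1 with hη
  set S : Set ((Fin n → ℝ) × ℝ) := m ⁻¹' u₀ with hS
  have hSopen : IsOpen S := hu₀open.preimage hmC.continuous
  have hSmem : ((0,0) : (Fin n → ℝ) × ℝ) ∈ S := by
    simp only [hS, Set.mem_preimage, hm]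
    simpa using hu₀mem
  have hηS : ContDiffOn ℝ 2 η S := by
    have h1 : ContDiffOn ℝ 2 (fun z => Ψ.symm (m z)) S := by
      apply hu_cd.comp hmC.contDiffOn
      intro z hz
      exact (hu₀sub hz).1
    have h2 : ContDiffOn ℝ 2 (fun z => (Ψ.symm (m z)).1) S :=
      contDiff_fst.comp_contDiffOn h1
    exact h2.sub (πKc.contDiff.comp contDiff_fst).contDiffOn
  have hη00 : η (0, 0) = 0 := by
    have hm00 : m ((0,0) : (Fin n → ℝ) × ℝ) = (0,0) := by simp [hm]
    simp only [hη]
    rw [hm00, hsymm00]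
    simp
  -- facts about points of S
  have hu₀tgt : u₀ ⊆ Ψ.target := fun w hw => (hu₀sub hw).2
  have hw_src : ∀ z ∈ S, Ψ.symm (m z) ∈ Ψ.source := fun z hz => Ψ.map_target (hu₀tgt hz)
  have hw_g : ∀ z ∈ S, g (Ψ.symm (m z)) = m z := by
    intro z hz
    have := Ψ.right_inv (hu₀tgt hz)
    rwa [hΨcoe] at this
  -- the neighborhoods
  refine ⟨(S ∩ η ⁻¹' (Metric.ball 0 (r/2))) ∩
      ((Metric.ball 0 (r/2)) ×ˢ (Metric.ball 0 r)), ?_, Metric.ball 0 (r/2),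
      Metric.ball_mem_nhds 0 (by positivity), η, ?_, hη00, ?_⟩
  · apply IsOpen.mem_nhds
    · exact ((hηS.continuousOn.isOpen_inter_preimage hSopen Metric.isOpen_ball).inter
        (Metric.isOpen_ball.prod Metric.isOpen_ball))
    · refine ⟨⟨hSmem, ?_⟩, ?_⟩
      · exact Set.mem_preimage.mpr (by rw [hη00]; exact Metric.mem_ball_self (by positivity))
      · constructor <;> exact Metric.mem_ball_self (by positivity)
  · exact hηS.mono (fun z hz => hz.1.1)
  · rintro ⟨ξ, ε⟩ ⟨⟨hzS, hzB⟩, hzP⟩ hξK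
    have hπξ : πKc ξ = ξ := by
      have h1 : πK' ξ = ⟨ξ, hξK⟩ := Submodule.linearProjOfIsCompl_apply_left hN ⟨ξ, hξK⟩
      show (K.subtype (πK' ξ) : Fin n → ℝ) = ξ
      rw [h1]
      rfl
    set w := Ψ.symm (m (ξ, ε)) with hwdef
    have hgw : g w = m (ξ, ε) := hw_g _ hzS
    have hw2 : w.2 = ε := congrArg Prod.snd hgw
    have hη_eq : η (ξ, ε) = w.1 - ξ := by
      have : η (ξ, ε) = w.1 - πKc ξ := rfl
      rw [this, hπξ]
    have hw1 : w.1 = ξ + η (ξ, ε) := by rw [hη_eq]; abel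
    have hfst : J w.1 + pc (φ (w.1 + x₀, w.2)) = J ξ := congrArg Prod.fst hgw
    rw [hw2] at hfst
    have hpc0 : pc (φ (w.1 + x₀, ε)) = 0 := by
      have hmemR : pc (φ (w.1 + x₀, ε)) ∈ R' := by
        have heq2 : pc (φ (w.1 + x₀, ε)) = J ξ - J w.1 := by
          rw [← hfst]; abel
        rw [heq2]
        exact sub_mem (hJmem ξ) (hJmem w.1)
      have hmemL : pc (φ (w.1 + x₀, ε)) ∈ LinearMap.range (L : (Fin n → ℝ) →ₗ[ℝ] (Fin n → ℝ)) := by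
        rw [← hp_range]
        exact LinearMap.mem_range_self p _
      exact hdisj _ hmemL hmemR
    have hJeq : J w.1 = J ξ := by rw [← hfst, hpc0, add_zero]
    have hπw : πK' w.1 = ⟨ξ, hξK⟩ := by
      have h1 : R'.subtype (e (πK' w.1)) = R'.subtype (e (πK' ξ)) := by
        rw [← hJval, ← hJval, hJeq]
      have h2 : e (πK' w.1) = e (πK' ξ) := R'.injective_subtype h1
      have h3 : πK' w.1 = πK' ξ := e.injective h2
      rw [h3]; exact Submodule.linearProjOfIsCompl_apply_left hN ⟨ξ, hξK⟩
    have hηN : η (ξ, ε) ∈ N := by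
      have hsum := Submodule.projection_add_projection_eq_self hN w.1
      have hcoe : ((πK' w.1 : K) : Fin n → ℝ) = ξ := by rw [hπw]
      have heq3 : η (ξ, ε) = ↑(N.linearProjOfIsCompl K hN.symm w.1) := by
        rw [hη_eq, ← hcoe]
        exact (eq_sub_iff_add_eq'.mpr hsum).symm
      rw [heq3]
      exact (N.linearProjOfIsCompl K hN.symm w.1).2
    have hηsol : p (φ (ξ + η (ξ, ε) + x₀, ε)) = 0 := by
      rw [← hw1]
      exact hpc0
    refine ⟨hzB, hηN, hηsol, ?_⟩
    intro y hyB hyN hy0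
    have hgy : g (ξ + y, ε) = m (ξ, ε) := by
      show (J (ξ + y) + pc (φ (ξ + y + x₀, ε)), ε) = (J ξ, ε)
      have hJy : J (ξ + y) = J ξ := by
        have h0 : πK' y = 0 := Submodule.linearProjOfIsCompl_apply_right' hN hyN
        rw [hJval, hJval]
        rw [map_add, h0, add_zero]
      have hpcy : pc (φ (ξ + y + x₀, ε)) = 0 := hy0
      rw [hJy, hpcy, add_zero]
    have hy_src : ((ξ + y, ε) : (Fin n → ℝ) × ℝ) ∈ Ψ.source := by
      apply hr_sub
      rw [Metric.mem_ball, Prod.dist_eq]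
      apply max_lt
      · rw [dist_zero_right]
        have h1 : ‖ξ‖ < r/2 := by
          have := hzP.1; rwa [Metric.mem_ball, dist_zero_right] at this
        have h2 : ‖y‖ < r/2 := by rwa [Metric.mem_ball, dist_zero_right] at hyB
        calc ‖ξ + y‖ ≤ ‖ξ‖ + ‖y‖ := norm_add_le _ _
          _ < r/2 + r/2 := by linarith
          _ = r := by ring
      · have := hzP.2; rwa [Metric.mem_ball] at this
    have hΨy : Ψ (ξ + y, ε) = Ψ w := by
      rw [hΨcoe, hgy, hgw]
    have heq4 : ((ξ + y, ε) : (Fin n → ℝ) × ℝ) = w := Ψ.injOn hy_src (hw_src _ hzS) hΨy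
    have h5 : ξ + y = w.1 := congrArg Prod.fst heq4
    rw [hw1] at h5
    exact add_left_cancel h5
end

section
/- Let A(t) = Df(γ(t)) where γ is a homoclinic orbit of the planar system ẋ = f(x) at a hyperbolic saddle, and let X(t) be the fundamental matrix with columns γ'(t) and ζ(t), Δ(t) = det X(t). Assume the exponential estimates |γᵢ'(t)ζⱼ(s)| < k e^{−ω(t−s)} for t ≥ s ≥ 0 and < k e^{ω(t−s)} for t ≤ s ≤ 0, and that Δ is bounded away from 0. Then for F ∈ C⁰_b(ℝ,ℝ²), the inhomogeneous equation ż − A(t)z = F(t) has a bounded solution if and only if ∫_ℝ (1/Δ(s)) f(γ(s)) ∧ F(s) ds = 0. -/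
open MeasureTheory

open Set Filter

section helpers

lemma expdecay_integrableOn_Ioi (ω t : ℝ) (hω : 0 < ω) :
    IntegrableOn (fun s => Real.exp (-(ω * (s - t)))) (Ioi t) := by
  have h := (exp_neg_integrableOn_Ioi t hω).const_mul (Real.exp (ω * t))
  have heq : (fun s : ℝ => Real.exp (-(ω * (s - t))))
      = fun s => Real.exp (ω * t) * Real.exp (-ω * s) := by
    funext s; rw [← Real.exp_add]; ring_nf
  rw [heq]; exact h

lemma expdecay_integral_Ioi (ω t : ℝ) (hω : 0 < ω) :
    ∫ s in Set.Ioi t, Real.exp (-(ω * (s - t))) = 1 / ω := by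
  have hderiv : ∀ s ∈ Ici t,
      HasDerivAt (fun s => -Real.exp (-(ω * (s - t))) / ω) (Real.exp (-(ω * (s - t)))) s := by
    intro s _
    have h1 : HasDerivAt (fun s : ℝ => -(ω * (s - t))) (-ω) s := by
      simpa using (((hasDerivAt_id s).sub_const t).const_mul ω).fun_neg
    have h2 := (h1.exp).neg.div_const ω
    exact h2.congr_deriv (by field_simp)
  have htend : Tendsto (fun s => -Real.exp (-(ω * (s - t))) / ω) atTop (nhds 0) := by
    have h3 : Tendsto (fun s : ℝ => -(ω * (s - t))) atTop atBot := by
      apply Filter.tendsto_neg_atBot_iff.mpr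
      exact Tendsto.const_mul_atTop hω (tendsto_atTop_add_const_right _ _ tendsto_id)
    simpa using ((Real.tendsto_exp_atBot.comp h3).neg.div_const ω)
  have h := integral_Ioi_of_hasDerivAt_of_tendsto' hderiv (expdecay_integrableOn_Ioi ω t hω) htend
  rw [h]; simp; ring

lemma expdecay_integrableOn_Iic (ω t : ℝ) (hω : 0 < ω) :
    IntegrableOn (fun s => Real.exp (ω * (s - t))) (Iic t) := by
  refine integrableOn_Iic_of_intervalIntegral_norm_bounded (1/ω) t
    (fun y => ((Real.continuous_exp.comp (by continuity)).intervalIntegrable y t).1) tendsto_id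
    (Filter.Eventually.of_forall fun y => ?_)
  have hint : ∀ a b : ℝ, ∫ s in a..b, Real.exp (ω * (s - t))
      = Real.exp (ω * (b - t)) / ω - Real.exp (ω * (a - t)) / ω := by
    intro a b
    refine intervalIntegral.integral_eq_sub_of_hasDerivAt
      (f := fun s => Real.exp (ω * (s - t)) / ω) (fun s _ => ?_) ?_
    · have h1 : HasDerivAt (fun s : ℝ => ω * (s - t)) ω s := by
        simpa using (((hasDerivAt_id s).sub_const t).const_mul ω)
      have h2 := (h1.exp).div_const ω
      exact h2.congr_deriv (by field_simp)
    · exact (Real.continuous_exp.comp (by continuity)).intervalIntegrable a b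
  have hb : ∀ s : ℝ, ‖Real.exp (ω * (s - t))‖ = Real.exp (ω * (s - t)) := fun s =>
    Real.norm_of_nonneg (Real.exp_pos _).le
  simp_rw [hb, hint]
  have h1 : Real.exp (ω * (y - t)) / ω ≥ 0 := by positivity
  have h2 : Real.exp (ω * (t - t)) / ω = 1 / ω := by simp
  linarith [h2]

lemma expdecay_integral_Iic (ω t : ℝ) (hω : 0 < ω) :
    ∫ s in Set.Iic t, Real.exp (ω * (s - t)) = 1 / ω := by
  have hderiv : ∀ s ∈ Iic t,
      HasDerivAt (fun s => Real.exp (ω * (s - t)) / ω) (Real.exp (ω * (s - t))) s := by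
    intro s _
    have h1 : HasDerivAt (fun s : ℝ => ω * (s - t)) ω s := by
      simpa using (((hasDerivAt_id s).sub_const t).const_mul ω)
    have h2 := (h1.exp).div_const ω
    exact h2.congr_deriv (by field_simp)
  have htend : Tendsto (fun s => Real.exp (ω * (s - t)) / ω) atBot (nhds 0) := by
    have h3 : Tendsto (fun s : ℝ => ω * (s - t)) atBot atBot :=
      Tendsto.const_mul_atBot hω (tendsto_atBot_add_const_right _ _ tendsto_id)
    simpa using ((Real.tendsto_exp_atBot.comp h3).div_const ω)
  have h := integral_Iic_of_hasDerivAt_of_tendsto' hderiv (expdecay_integrableOn_Iic ω t hω) htend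
  rw [h]; simp

lemma wedge_trace (L : (Fin 2 → ℝ) →L[ℝ] (Fin 2 → ℝ)) (u v : Fin 2 → ℝ) :
    L u 0 * v 1 - L u 1 * v 0 + (u 0 * L v 1 - u 1 * L v 0)
      = (L (Pi.single 0 1) 0 + L (Pi.single 1 1) 1) * (u 0 * v 1 - u 1 * v 0) := by
  have key : ∀ (w : Fin 2 → ℝ) (i : Fin 2),
      L w i = w 0 * L (Pi.single 0 1) i + w 1 * L (Pi.single 1 1) i := by
    intro w i
    have hw : w = w 0 • (Pi.single 0 1 : Fin 2 → ℝ) + w 1 • (Pi.single 1 1 : Fin 2 → ℝ) := by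
      funext j; fin_cases j <;> simp
    calc L w i = L (w 0 • (Pi.single 0 1 : Fin 2 → ℝ) + w 1 • (Pi.single 1 1 : Fin 2 → ℝ)) i := by
          rw [← hw]
    _ = _ := by rw [map_add, L.map_smul, L.map_smul]; simp
  rw [key u 0, key u 1, key v 0, key v 1]
  ring

end helpers

/-- Bounded-solution criterion: under the exponential dichotomy estimates along
a homoclinic orbit `γ` of `ẋ = f(x)` with second solution `ζ` of the
variational equation and Wronskian `Δ` bounded away from zero, the
inhomogeneous equation `ż − Df(γ(t))z = F(t)` with `F` bounded continuous has
a bounded solution iff `∫_ℝ (1/Δ(s)) f(γ(s)) ∧ F(s) ds = 0`. -/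
theorem bounded_solution_criterion
    (f : (Fin 2 → ℝ) → (Fin 2 → ℝ)) (hf : ContDiff ℝ 2 f)
    (ω : ℝ) (hω : ω > 0)
    (γ : ℝ → Fin 2 → ℝ) (hγ : ∀ t, HasDerivAt γ (f (γ t)) t)
    (hγ0 : Filter.Tendsto γ Filter.atTop (nhds 0))
    (hγ0' : Filter.Tendsto γ Filter.atBot (nhds 0))
    (ζ : ℝ → Fin 2 → ℝ)
    (hζ : ∀ t, HasDerivAt ζ (fderiv ℝ f (γ t) (ζ t)) t)
    (Δ : ℝ → ℝ)
    (hΔdef : ∀ t, Δ t = deriv γ t 0 * ζ t 1 - deriv γ t 1 * ζ t 0)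
    (hΔ : ∃ m > 0, ∀ t, m ≤ |Δ t|)
    (hdich : ∃ k > 0, ∀ (i j : Fin 2) (t s : ℝ),
      (0 ≤ s → s ≤ t → |deriv γ t i * ζ s j| < k * Real.exp (-(ω * (t - s)))) ∧
      (t ≤ s → s ≤ 0 → |deriv γ t i * ζ s j| < k * Real.exp (ω * (t - s))))
    (F : ℝ → Fin 2 → ℝ) (hFc : Continuous F) (hFb : ∃ M, ∀ t, ‖F t‖ ≤ M) :
    (∃ z : ℝ → Fin 2 → ℝ,
        (∀ t, HasDerivAt z (fderiv ℝ f (γ t) (z t) + F t) t) ∧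
        ∃ M, ∀ t, ‖z t‖ ≤ M) ↔
      ∫ s, (1 / Δ s) * (f (γ s) 0 * F s 1 - f (γ s) 1 * F s 0) = 0 := by
  classical
  obtain ⟨m, hm, hmΔ⟩ := hΔ
  obtain ⟨k, hk, hdich'⟩ := hdich
  obtain ⟨M, hM⟩ := hFb
  have hM0 : 0 ≤ M := le_trans (norm_nonneg _) (hM 0)
  have hdf : Differentiable ℝ f := hf.differentiable (by norm_num)
  have hderivγ : ∀ t, deriv γ t = f (γ t) := fun t => (hγ t).deriv
  have hγd : Differentiable ℝ γ := fun t => (hγ t).differentiableAt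
  have hγc : Continuous γ := hγd.continuous
  have hζd : Differentiable ℝ ζ := fun t => (hζ t).differentiableAt
  have hζcont : Continuous ζ := hζd.continuous
  have huc : Continuous (fun t => f (γ t)) := hdf.continuous.comp hγc
  have hui : ∀ i : Fin 2, Continuous (fun t => f (γ t) i) :=
    fun i => (continuous_apply i).comp huc
  have hζi : ∀ i : Fin 2, Continuous (fun t => ζ t i) :=
    fun i => (continuous_apply i).comp hζcont
  have hFi : ∀ i : Fin 2, Continuous (fun t => F t i) :=
    fun i => (continuous_apply i).comp hFc
  have hΔ' : ∀ t, Δ t = f (γ t) 0 * ζ t 1 - f (γ t) 1 * ζ t 0 := by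
    intro t; rw [hΔdef t, hderivγ t]
  have hΔc : Continuous Δ := by
    have : Δ = fun t => f (γ t) 0 * ζ t 1 - f (γ t) 1 * ζ t 0 := funext hΔ'
    rw [this]
    exact ((hui 0).mul (hζi 1)).sub ((hui 1).mul (hζi 0))
  have hΔne : ∀ t, Δ t ≠ 0 := by
    intro t h
    have := hmΔ t
    rw [h] at this
    simp at this
    linarith
  have hu' : ∀ t, HasDerivAt (fun t => f (γ t)) (fderiv ℝ f (γ t) (f (γ t))) t :=
    fun t => (hdf (γ t)).hasFDerivAt.comp_hasDerivAt t (hγ t)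
  -- bounds on components of F
  have hFbd : ∀ (t : ℝ) (i : Fin 2), |F t i| ≤ M := by
    intro t i
    have := (norm_le_pi_norm (F t) i).trans (hM t)
    simpa using this
  -- weak dichotomy in terms of f ∘ γ
  have hd1 : ∀ (i j : Fin 2) (t s : ℝ), 0 ≤ s → s ≤ t →
      |f (γ t) i * ζ s j| ≤ k * Real.exp (-(ω * (t - s))) := by
    intro i j t s h1 h2
    rw [← hderivγ t]
    exact ((hdich' i j t s).1 h1 h2).le
  have hd2 : ∀ (i j : Fin 2) (t s : ℝ), t ≤ s → s ≤ 0 →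
      |f (γ t) i * ζ s j| ≤ k * Real.exp (ω * (t - s)) := by
    intro i j t s h1 h2
    rw [← hderivγ t]
    exact ((hdich' i j t s).2 h1 h2).le
  -- a nonzero component of ζ 0
  obtain ⟨j₀, hj₀⟩ : ∃ j, ζ 0 j ≠ 0 := by
    by_contra h
    push_neg at h
    have h0 := hmΔ 0
    rw [hΔ' 0, h 0, h 1] at h0
    simp at h0
    linarith
  set cz : ℝ := |ζ 0 j₀| with hcz
  have hcz0 : 0 < cz := abs_pos.mpr hj₀
  -- exponential decay of f ∘ γ
  have hudecay : ∀ (t : ℝ) (i : Fin 2), |f (γ t) i| ≤ k / cz * Real.exp (-(ω * |t|)) := by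
    intro t i
    have key : ∀ E : ℝ, |f (γ t) i * ζ 0 j₀| ≤ k * E → |f (γ t) i| ≤ k / cz * E := by
      intro E hE
      rw [abs_mul] at hE
      have h2 := (le_div_iff₀ hcz0).mpr hE
      calc |f (γ t) i| ≤ k * E / cz := h2
        _ = k / cz * E := by ring
    rcases le_total 0 t with ht | ht
    · rw [abs_of_nonneg ht]
      exact key _ (by simpa using hd1 i j₀ t 0 le_rfl ht)
    · rw [abs_of_nonpos ht]
      have h := key _ (hd2 i j₀ t 0 ht le_rfl)
      simpa using h
  -- uniform constant
  set C1 : ℝ := 2 * k * M / m with hC1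
  have hC1nonneg : 0 ≤ C1 := by
    apply div_nonneg _ hm.le
    have := mul_nonneg (mul_nonneg (by norm_num : (0:ℝ) ≤ 2) hk.le) hM0
    linarith
  -- the master pointwise bound
  have hkey : ∀ (P Q0 Q1 R0 R1 D E : ℝ), m ≤ |D| → 0 ≤ E →
      |P * Q1| ≤ k * E → |P * Q0| ≤ k * E → |R0| ≤ M → |R1| ≤ M →
      |P * (1 / D * (Q1 * R0 - Q0 * R1))| ≤ C1 * E := by
    intro P Q0 Q1 R0 R1 D E hD hE h1 h0 hR0 hR1
    have habs : |P * (1 / D * (Q1 * R0 - Q0 * R1))| = |P * Q1 * R0 - P * Q0 * R1| / |D| := by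
      rw [show P * (1 / D * (Q1 * R0 - Q0 * R1)) = (P * Q1 * R0 - P * Q0 * R1) / D by ring,
        abs_div]
    rw [habs]
    have hkE : 0 ≤ k * E := mul_nonneg hk.le hE
    have hnum : |P * Q1 * R0 - P * Q0 * R1| ≤ k * E * M + k * E * M := by
      calc |P * Q1 * R0 - P * Q0 * R1| ≤ |P * Q1 * R0| + |P * Q0 * R1| := abs_sub _ _
        _ = |P * Q1| * |R0| + |P * Q0| * |R1| := by rw [abs_mul (P * Q1) R0, abs_mul (P * Q0) R1]
        _ ≤ k * E * M + k * E * M := by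
            exact add_le_add (mul_le_mul h1 hR0 (abs_nonneg _) hkE)
              (mul_le_mul h0 hR1 (abs_nonneg _) hkE)
    calc |P * Q1 * R0 - P * Q0 * R1| / |D| ≤ (k * E * M + k * E * M) / m :=
          div_le_div₀ (by linarith [mul_nonneg hkE hM0]) hnum hm hD
      _ = C1 * E := by rw [hC1]; ring
  -- the two auxiliary integrands
  set a : ℝ → ℝ := fun s => 1 / Δ s * (ζ s 1 * F s 0 - ζ s 0 * F s 1) with hadef
  set g : ℝ → ℝ := fun s => 1 / Δ s * (f (γ s) 0 * F s 1 - f (γ s) 1 * F s 0) with hgdef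
  have hinvΔ : Continuous fun s => 1 / Δ s := continuous_const.div hΔc hΔne
  have hac : Continuous a := by
    rw [hadef]
    exact hinvΔ.mul (((hζi 1).mul (hFi 0)).sub ((hζi 0).mul (hFi 1)))
  have hgc : Continuous g := by
    rw [hgdef]
    exact hinvΔ.mul (((hui 0).mul (hFi 1)).sub ((hui 1).mul (hFi 0)))
  -- four instances of the master bound
  have key1 : ∀ (i : Fin 2) (t s : ℝ), 0 ≤ s → s ≤ t →
      |f (γ t) i * a s| ≤ C1 * Real.exp (ω * (s - t)) := by
    intro i t s h1 h2
    refine hkey _ _ _ _ _ _ _ (hmΔ s) (Real.exp_pos _).le ?_ ?_ (hFbd s 0) (hFbd s 1)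
    · have h := hd1 i 1 t s h1 h2
      rwa [show -(ω * (t - s)) = ω * (s - t) by ring] at h
    · have h := hd1 i 0 t s h1 h2
      rwa [show -(ω * (t - s)) = ω * (s - t) by ring] at h
  have key2 : ∀ (i : Fin 2) (t s : ℝ), t ≤ s → s ≤ 0 →
      |f (γ t) i * a s| ≤ C1 * Real.exp (-(ω * (s - t))) := by
    intro i t s h1 h2
    refine hkey _ _ _ _ _ _ _ (hmΔ s) (Real.exp_pos _).le ?_ ?_ (hFbd s 0) (hFbd s 1)
    · have h := hd2 i 1 t s h1 h2
      rwa [show ω * (t - s) = -(ω * (s - t)) by ring] at h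
    · have h := hd2 i 0 t s h1 h2
      rwa [show ω * (t - s) = -(ω * (s - t)) by ring] at h
  have key3 : ∀ (i : Fin 2) (t s : ℝ), 0 ≤ t → t ≤ s →
      |ζ t i * g s| ≤ C1 * Real.exp (-(ω * (s - t))) := by
    intro i t s h1 h2
    refine hkey _ _ _ _ _ _ _ (hmΔ s) (Real.exp_pos _).le ?_ ?_ (hFbd s 1) (hFbd s 0)
    · have h := hd1 0 i s t h1 h2
      rwa [mul_comm] at h
    · have h := hd1 1 i s t h1 h2
      rwa [mul_comm] at h
  have key4 : ∀ (i : Fin 2) (t s : ℝ), s ≤ t → t ≤ 0 →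
      |ζ t i * g s| ≤ C1 * Real.exp (ω * (s - t)) := by
    intro i t s h1 h2
    refine hkey _ _ _ _ _ _ _ (hmΔ s) (Real.exp_pos _).le ?_ ?_ (hFbd s 1) (hFbd s 0)
    · have h := hd2 0 i s t h1 h2
      rwa [mul_comm] at h
    · have h := hd2 1 i s t h1 h2
      rwa [mul_comm] at h
  -- pointwise bound on g
  have hgbd : ∀ s, |g s| ≤ C1 / cz * Real.exp (-(ω * |s|)) := by
    intro s
    have h := hkey 1 (f (γ s) 1) (f (γ s) 0) (F s 1) (F s 0) (Δ s)
      (1 / cz * Real.exp (-(ω * |s|))) (hmΔ s) (by positivity) ?_ ?_ (hFbd s 1) (hFbd s 0)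
    · rw [one_mul] at h
      calc |g s| ≤ C1 * (1 / cz * Real.exp (-(ω * |s|))) := h
        _ = C1 / cz * Real.exp (-(ω * |s|)) := by ring
    · rw [one_mul]
      have := hudecay s 0
      calc |f (γ s) 0| ≤ k / cz * Real.exp (-(ω * |s|)) := this
        _ = k * (1 / cz * Real.exp (-(ω * |s|))) := by ring
    · rw [one_mul]
      have := hudecay s 1
      calc |f (γ s) 1| ≤ k / cz * Real.exp (-(ω * |s|)) := this
        _ = k * (1 / cz * Real.exp (-(ω * |s|))) := by ring
  -- integrability of g
  have hgInt : Integrable g := by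
    have hIic : IntegrableOn g (Iic 0) := by
      refine Integrable.mono' ((expdecay_integrableOn_Iic ω 0 hω).const_mul (C1 / cz))
        hgc.aestronglyMeasurable.restrict ?_
      rw [ae_restrict_iff' measurableSet_Iic]
      refine ae_of_all _ fun s hs => ?_
      have h := hgbd s
      rw [Real.norm_eq_abs]
      have habs : |s| = -(s - 0) := by
        simp [abs_of_nonpos (mem_Iic.mp hs)]
      rw [habs] at h
      calc |g s| ≤ C1 / cz * Real.exp (-(ω * -(s - 0))) := h
        _ = C1 / cz * Real.exp (ω * (s - 0)) := by ring_nf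
    have hIoi : IntegrableOn g (Ioi 0) := by
      refine Integrable.mono' ((expdecay_integrableOn_Ioi ω 0 hω).const_mul (C1 / cz))
        hgc.aestronglyMeasurable.restrict ?_
      rw [ae_restrict_iff' measurableSet_Ioi]
      refine ae_of_all _ fun s hs => ?_
      have h := hgbd s
      rw [Real.norm_eq_abs]
      have habs : |s| = s - 0 := by
        simp [abs_of_nonneg (le_of_lt (mem_Ioi.mp hs))]
      rwa [habs] at h
    have hun : IntegrableOn g (Iic 0 ∪ Ioi 0) := hIic.union hIoi
    rwa [Iic_union_Ioi, integrableOn_univ] at hun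
  constructor
  · rintro ⟨z, hz, Mz, hMz⟩
    have hMz0 : 0 ≤ Mz := le_trans (norm_nonneg _) (hMz 0)
    have hzbd : ∀ (t : ℝ) (i : Fin 2), |z t i| ≤ Mz := by
      intro t i
      have := (norm_le_pi_norm (z t) i).trans (hMz t)
      simpa using this
    set B : ℝ → ℝ := fun t => (f (γ t) 0 * z t 1 - f (γ t) 1 * z t 0) / Δ t with hBdef
    have hBd : ∀ t, HasDerivAt B (g t) t := by
      intro t
      have hu'c : ∀ i : Fin 2,
          HasDerivAt (fun t => f (γ t) i) (fderiv ℝ f (γ t) (f (γ t)) i) t :=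
        fun i => hasDerivAt_pi.mp (hu' t) i
      have hζ'c : ∀ i : Fin 2,
          HasDerivAt (fun t => ζ t i) (fderiv ℝ f (γ t) (ζ t) i) t :=
        fun i => hasDerivAt_pi.mp (hζ t) i
      have hz'c : ∀ i : Fin 2,
          HasDerivAt (fun t => z t i) (fderiv ℝ f (γ t) (z t) i + F t i) t := by
        intro i
        have h := hasDerivAt_pi.mp (hz t) i
        simpa using h
      have hN : HasDerivAt (fun t => f (γ t) 0 * z t 1 - f (γ t) 1 * z t 0)
          (fderiv ℝ f (γ t) (f (γ t)) 0 * z t 1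
            + f (γ t) 0 * (fderiv ℝ f (γ t) (z t) 1 + F t 1)
            - (fderiv ℝ f (γ t) (f (γ t)) 1 * z t 0
              + f (γ t) 1 * (fderiv ℝ f (γ t) (z t) 0 + F t 0))) t :=
        ((hu'c 0).mul (hz'c 1)).sub ((hu'c 1).mul (hz'c 0))
      have hΔder : HasDerivAt Δ
          ((fderiv ℝ f (γ t) (Pi.single 0 1) 0 + fderiv ℝ f (γ t) (Pi.single 1 1) 1) * Δ t) t := by
        have h1 : HasDerivAt (fun t => f (γ t) 0 * ζ t 1 - f (γ t) 1 * ζ t 0)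
            (fderiv ℝ f (γ t) (f (γ t)) 0 * ζ t 1 + f (γ t) 0 * fderiv ℝ f (γ t) (ζ t) 1
              - (fderiv ℝ f (γ t) (f (γ t)) 1 * ζ t 0 + f (γ t) 1 * fderiv ℝ f (γ t) (ζ t) 0)) t :=
          ((hu'c 0).mul (hζ'c 1)).sub ((hu'c 1).mul (hζ'c 0))
        have h2 : HasDerivAt Δ
            (fderiv ℝ f (γ t) (f (γ t)) 0 * ζ t 1 + f (γ t) 0 * fderiv ℝ f (γ t) (ζ t) 1
              - (fderiv ℝ f (γ t) (f (γ t)) 1 * ζ t 0 + f (γ t) 1 * fderiv ℝ f (γ t) (ζ t) 0)) t :=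
          h1.congr_of_eventuallyEq (Filter.Eventually.of_forall hΔ')
        convert h2 using 1
        have hw := wedge_trace (fderiv ℝ f (γ t)) (f (γ t)) (ζ t)
        rw [hΔ' t]
        linarith
      have hq := hN.div hΔder (hΔne t)
      rw [hBdef]
      refine hq.congr_deriv ?_
      symm
      have hw := wedge_trace (fderiv ℝ f (γ t)) (f (γ t)) (z t)
      simp only [hgdef]
      have h2 := hΔne t
      have hnum : (fderiv ℝ f (γ t) (f (γ t)) 0 * z t 1
            + f (γ t) 0 * (fderiv ℝ f (γ t) (z t) 1 + F t 1)
            - (fderiv ℝ f (γ t) (f (γ t)) 1 * z t 0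
              + f (γ t) 1 * (fderiv ℝ f (γ t) (z t) 0 + F t 0))) * Δ t
          - (f (γ t) 0 * z t 1 - f (γ t) 1 * z t 0)
            * ((fderiv ℝ f (γ t) (Pi.single 0 1) 0 + fderiv ℝ f (γ t) (Pi.single 1 1) 1) * Δ t)
          = (f (γ t) 0 * F t 1 - f (γ t) 1 * F t 0) * Δ t := by
        linear_combination (Δ t) * hw
      rw [hnum]
      field_simp
    have hBbd : ∀ t, |B t| ≤ 2 * Mz * (k / cz) / m * Real.exp (-(ω * |t|)) := by
      intro t
      have h0 := hudecay t 0
      have h1 := hudecay t 1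
      have hz0 := hzbd t 0
      have hz1 := hzbd t 1
      have hD := hmΔ t
      have hexp0 : (0:ℝ) ≤ k / cz * Real.exp (-(ω * |t|)) :=
        mul_nonneg (div_nonneg hk.le hcz0.le) (Real.exp_pos _).le
      have hnum : |f (γ t) 0 * z t 1 - f (γ t) 1 * z t 0|
          ≤ 2 * Mz * (k / cz) * Real.exp (-(ω * |t|)) := by
        calc |f (γ t) 0 * z t 1 - f (γ t) 1 * z t 0|
            ≤ |f (γ t) 0 * z t 1| + |f (γ t) 1 * z t 0| := abs_sub _ _
          _ = |f (γ t) 0| * |z t 1| + |f (γ t) 1| * |z t 0| := by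
              rw [abs_mul, abs_mul]
          _ ≤ (k / cz * Real.exp (-(ω * |t|))) * Mz + (k / cz * Real.exp (-(ω * |t|))) * Mz :=
              add_le_add (mul_le_mul h0 hz1 (abs_nonneg _) hexp0)
                (mul_le_mul h1 hz0 (abs_nonneg _) hexp0)
          _ = 2 * Mz * (k / cz) * Real.exp (-(ω * |t|)) := by ring
      have hnonneg : (0:ℝ) ≤ 2 * Mz * (k / cz) * Real.exp (-(ω * |t|)) := by
        have := mul_nonneg (mul_nonneg (mul_nonneg (by norm_num : (0:ℝ) ≤ 2) hMz0)
          (div_nonneg hk.le hcz0.le)) (Real.exp_pos (-(ω * |t|))).le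
        linarith
      calc |B t| = |f (γ t) 0 * z t 1 - f (γ t) 1 * z t 0| / |Δ t| := by
            rw [hBdef]; exact abs_div _ _
        _ ≤ 2 * Mz * (k / cz) * Real.exp (-(ω * |t|)) / m := div_le_div₀ hnonneg hnum hm hD
        _ = 2 * Mz * (k / cz) / m * Real.exp (-(ω * |t|)) := by ring
    have hexp_top : Tendsto (fun t : ℝ => 2 * Mz * (k / cz) / m * Real.exp (-(ω * |t|)))
        atTop (nhds 0) := by
      have h1 : Tendsto (fun t : ℝ => -(ω * |t|)) atTop atBot := by
        apply tendsto_neg_atBot_iff.mpr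
        exact Tendsto.const_mul_atTop hω tendsto_abs_atTop_atTop
      simpa using (Real.tendsto_exp_atBot.comp h1).const_mul (2 * Mz * (k / cz) / m)
    have hexp_bot : Tendsto (fun t : ℝ => 2 * Mz * (k / cz) / m * Real.exp (-(ω * |t|)))
        atBot (nhds 0) := by
      have h1 : Tendsto (fun t : ℝ => -(ω * |t|)) atBot atBot := by
        apply tendsto_neg_atBot_iff.mpr
        exact Tendsto.const_mul_atTop hω tendsto_abs_atBot_atTop
      simpa using (Real.tendsto_exp_atBot.comp h1).const_mul (2 * Mz * (k / cz) / m)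
    have hBtop : Tendsto B atTop (nhds 0) :=
      squeeze_zero_norm (fun t => by rw [Real.norm_eq_abs]; exact hBbd t) hexp_top
    have hBbot : Tendsto B atBot (nhds 0) :=
      squeeze_zero_norm (fun t => by rw [Real.norm_eq_abs]; exact hBbd t) hexp_bot
    have hftc : ∀ T : ℝ, ∫ s in (-T)..T, g s = B T - B (-T) := fun T =>
      intervalIntegral.integral_eq_sub_of_hasDerivAt (fun s _ => hBd s)
        (hgc.intervalIntegrable _ _)
    have h1 : Tendsto (fun T : ℝ => ∫ s in (-T)..T, g s) atTop (nhds (∫ s, g s)) :=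
      intervalIntegral_tendsto_integral hgInt tendsto_neg_atTop_atBot tendsto_id
    have h2 : Tendsto (fun T : ℝ => ∫ s in (-T)..T, g s) atTop (nhds 0) := by
      have h3 := hBtop.sub (hBbot.comp tendsto_neg_atTop_atBot)
      simp only [sub_zero] at h3
      have heq : (fun T : ℝ => ∫ s in (-T)..T, g s) = fun T => B T - B (-T) := funext hftc
      rw [heq]
      simpa using h3
    exact tendsto_nhds_unique h1 h2
  · intro hint0
    have hgiIic : ∀ t : ℝ, IntegrableOn g (Iic t) := fun _ => hgInt.integrableOn
    have hgiIoi : ∀ t : ℝ, IntegrableOn g (Ioi t) := fun _ => hgInt.integrableOn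
    set A : ℝ → ℝ := fun t => ∫ s in (0:ℝ)..t, a s with hAdef
    set B : ℝ → ℝ := fun t => ∫ s in Iic t, g s with hBdef
    have hAd : ∀ t, HasDerivAt A (a t) t := by
      intro t
      rw [hAdef]
      exact intervalIntegral.integral_hasDerivAt_right (hac.intervalIntegrable _ _)
        (hac.stronglyMeasurableAtFilter _ _) hac.continuousAt
    have hBeq : ∀ t, B t = (∫ s in Iic 0, g s) + ∫ s in (0:ℝ)..t, g s := by
      intro t
      have h := intervalIntegral.integral_Iic_sub_Iic (hgiIic 0) (hgiIic t)
      rw [hBdef]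
      linarith
    have hBd : ∀ t, HasDerivAt B (g t) t := by
      intro t
      have h := (intervalIntegral.integral_hasDerivAt_right (hgc.intervalIntegrable (0:ℝ) t)
        (hgc.stronglyMeasurableAtFilter _ _) (hgc.continuousAt : ContinuousAt g t)).const_add
        (∫ s in Iic 0, g s)
      have heq : B = fun t => (∫ s in Iic 0, g s) + ∫ s in (0:ℝ)..t, g s := funext hBeq
      rw [heq]
      exact h
    have hBneg : ∀ t, B t = -∫ s in Ioi t, g s := by
      intro t
      have h := intervalIntegral.integral_Iic_add_Ioi (hgiIic t) (hgiIoi t)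
      rw [hint0] at h
      rw [hBdef]
      linarith
    refine ⟨fun t i => f (γ t) i * A t + ζ t i * B t, fun t => ?_, ?_⟩
    · apply hasDerivAt_pi.mpr
      intro i
      have hu'c := hasDerivAt_pi.mp (hu' t)
      have hζ'c := hasDerivAt_pi.mp (hζ t)
      have h1 : HasDerivAt (fun t => f (γ t) i * A t + ζ t i * B t)
          ((fderiv ℝ f (γ t) (f (γ t)) i * A t + f (γ t) i * a t)
            + (fderiv ℝ f (γ t) (ζ t) i * B t + ζ t i * g t)) t :=
        ((hu'c i).mul (hAd t)).add ((hζ'c i).mul (hBd t))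
      have hlin : fderiv ℝ f (γ t) (fun j => f (γ t) j * A t + ζ t j * B t) i
          = fderiv ℝ f (γ t) (f (γ t)) i * A t + fderiv ℝ f (γ t) (ζ t) i * B t := by
        have hfun : (fun j => f (γ t) j * A t + ζ t j * B t)
            = A t • f (γ t) + B t • ζ t := by
          funext j
          simp [mul_comm]
        rw [hfun, map_add, (fderiv ℝ f (γ t)).map_smul, (fderiv ℝ f (γ t)).map_smul]
        simp [mul_comm]
      have hXF : f (γ t) i * a t + ζ t i * g t = F t i := by
        simp only [hadef, hgdef]
        have h2 := hΔne t
        have h3 := hΔ' t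
        fin_cases i <;> (simp only [Fin.zero_eta, Fin.mk_one]; field_simp; rw [h3]; ring)
      have h2 : ((fderiv ℝ f (γ t)) (fun j => f (γ t) j * A t + ζ t j * B t) + F t) i
          = (fderiv ℝ f (γ t) (f (γ t)) i * A t + f (γ t) i * a t)
            + (fderiv ℝ f (γ t) (ζ t) i * B t + ζ t i * g t) := by
        simp only [Pi.add_apply]
        rw [hlin, ← hXF]
        ring
      have hgoal : HasDerivAt (fun x => f (γ x) i * A x + ζ x i * B x)
          (((fderiv ℝ f (γ t)) (fun j => f (γ t) j * A t + ζ t j * B t) + F t) i) t := by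
        rw [h2]; exact h1
      exact hgoal
    · have hCω : 0 ≤ C1 / ω := div_nonneg hC1nonneg hω.le
      refine ⟨C1 / ω + C1 / ω, fun t => ?_⟩
      rw [pi_norm_le_iff_of_nonneg (by linarith)]
      intro i
      rw [Real.norm_eq_abs]
      have hbA : |f (γ t) i * A t| ≤ C1 / ω := by
        rcases le_total 0 t with ht | ht
        · have hmul : f (γ t) i * A t = ∫ s in Set.Ioc 0 t, f (γ t) i * a s := by
            rw [hAdef]
            rw [← intervalIntegral.integral_const_mul, intervalIntegral.integral_of_le ht]
          rw [hmul]
          have h1 := norm_integral_le_integral_norm (μ := volume.restrict (Set.Ioc 0 t))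
            (fun s => f (γ t) i * a s)
          rw [Real.norm_eq_abs] at h1
          have h2 : ∫ s in Set.Ioc 0 t, ‖f (γ t) i * a s‖
              ≤ ∫ s in Set.Ioc 0 t, C1 * Real.exp (ω * (s - t)) := by
            refine setIntegral_mono_on ((continuous_const.mul hac).norm.integrableOn_Ioc)
              (IntegrableOn.mono_set
                ((expdecay_integrableOn_Iic ω t hω).const_mul C1) Ioc_subset_Iic_self) measurableSet_Ioc ?_
            intro s hs
            rw [Real.norm_eq_abs]
            exact key1 i t s hs.1.le hs.2
          have h3 : ∫ s in Set.Ioc 0 t, C1 * Real.exp (ω * (s - t))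
              ≤ ∫ s in Set.Iic t, C1 * Real.exp (ω * (s - t)) := by
            refine setIntegral_mono_set ((expdecay_integrableOn_Iic ω t hω).const_mul C1)
              (ae_of_all _ fun s => mul_nonneg hC1nonneg (Real.exp_pos _).le)
              (HasSubset.Subset.eventuallyLE Ioc_subset_Iic_self)
          have h4 : ∫ s in Set.Iic t, C1 * Real.exp (ω * (s - t)) = C1 * (1/ω) := by
            rw [integral_const_mul, expdecay_integral_Iic ω t hω]
          have h5 : C1 * (1/ω) = C1 / ω := by ring
          linarith
        · have hmul : f (γ t) i * A t = -∫ s in Set.Ioc t 0, f (γ t) i * a s := by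
            rw [hAdef]
            rw [← intervalIntegral.integral_const_mul, intervalIntegral.integral_symm,
              intervalIntegral.integral_of_le ht]
          rw [hmul, abs_neg]
          have h1 := norm_integral_le_integral_norm (μ := volume.restrict (Set.Ioc t 0))
            (fun s => f (γ t) i * a s)
          rw [Real.norm_eq_abs] at h1
          have h2 : ∫ s in Set.Ioc t 0, ‖f (γ t) i * a s‖
              ≤ ∫ s in Set.Ioc t 0, C1 * Real.exp (-(ω * (s - t))) := by
            refine setIntegral_mono_on ((continuous_const.mul hac).norm.integrableOn_Ioc)
              (IntegrableOn.mono_set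
                ((expdecay_integrableOn_Ioi ω t hω).const_mul C1) Ioc_subset_Ioi_self) measurableSet_Ioc ?_
            intro s hs
            rw [Real.norm_eq_abs]
            exact key2 i t s hs.1.le hs.2
          have h3 : ∫ s in Set.Ioc t 0, C1 * Real.exp (-(ω * (s - t)))
              ≤ ∫ s in Set.Ioi t, C1 * Real.exp (-(ω * (s - t))) := by
            refine setIntegral_mono_set ((expdecay_integrableOn_Ioi ω t hω).const_mul C1)
              (ae_of_all _ fun s => mul_nonneg hC1nonneg (Real.exp_pos _).le)
              (HasSubset.Subset.eventuallyLE Ioc_subset_Ioi_self)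
          have h4 : ∫ s in Set.Ioi t, C1 * Real.exp (-(ω * (s - t))) = C1 * (1/ω) := by
            rw [integral_const_mul, expdecay_integral_Ioi ω t hω]
          have h5 : C1 * (1/ω) = C1 / ω := by ring
          linarith
      have hbB : |ζ t i * B t| ≤ C1 / ω := by
        rcases le_total 0 t with ht | ht
        · have hmul : ζ t i * B t = -∫ s in Set.Ioi t, ζ t i * g s := by
            rw [hBneg t, integral_const_mul]
            ring
          rw [hmul, abs_neg]
          have h1 := norm_integral_le_integral_norm (μ := volume.restrict (Set.Ioi t))
            (fun s => ζ t i * g s)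
          rw [Real.norm_eq_abs] at h1
          have h2 : ∫ s in Set.Ioi t, ‖ζ t i * g s‖
              ≤ ∫ s in Set.Ioi t, C1 * Real.exp (-(ω * (s - t))) := by
            refine setIntegral_mono_on ((hgInt.const_mul (ζ t i)).norm.integrableOn)
              ((expdecay_integrableOn_Ioi ω t hω).const_mul C1) measurableSet_Ioi ?_
            intro s hs
            rw [Real.norm_eq_abs]
            exact key3 i t s ht (le_of_lt hs)
          have h4 : ∫ s in Set.Ioi t, C1 * Real.exp (-(ω * (s - t))) = C1 * (1/ω) := by
            rw [integral_const_mul, expdecay_integral_Ioi ω t hω]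
          have h5 : C1 * (1/ω) = C1 / ω := by ring
          linarith
        · have hmul : ζ t i * B t = ∫ s in Set.Iic t, ζ t i * g s := by
            rw [hBdef, integral_const_mul]
          rw [hmul]
          have h1 := norm_integral_le_integral_norm (μ := volume.restrict (Set.Iic t))
            (fun s => ζ t i * g s)
          rw [Real.norm_eq_abs] at h1
          have h2 : ∫ s in Set.Iic t, ‖ζ t i * g s‖
              ≤ ∫ s in Set.Iic t, C1 * Real.exp (ω * (s - t)) := by
            refine setIntegral_mono_on ((hgInt.const_mul (ζ t i)).norm.integrableOn)
              ((expdecay_integrableOn_Iic ω t hω).const_mul C1) measurableSet_Iic ?_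
            intro s hs
            rw [Real.norm_eq_abs]
            exact key4 i t s hs ht
          have h4 : ∫ s in Set.Iic t, C1 * Real.exp (ω * (s - t)) = C1 * (1/ω) := by
            rw [integral_const_mul, expdecay_integral_Iic ω t hω]
          have h5 : C1 * (1/ω) = C1 / ω := by ring
          linarith
      calc |f (γ t) i * A t + ζ t i * B t|
          ≤ |f (γ t) i * A t| + |ζ t i * B t| := abs_add_le _ _
        _ ≤ C1 / ω + C1 / ω := add_le_add hbA hbB
end

section
/- Under the hypotheses of the bounded-solution criterion (∫_ℝ (1/Δ(s)) f(γ(s)) ∧ F(s) ds = 0 and the dichotomy estimates), the function z(t) with components z_j(t) = γ_j'(t)·(x₂ − ∫₀ᵗ (ζ(s)/Δ(s)) ∧ F(s) ds) + ζ_j(t)·∫_{−∞}^{t} (γ'(s)/Δ(s)) ∧ F(s) ds, j = 1,2, is a bounded solution of ż − A(t)z = F(t). -/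
open MeasureTheory intervalIntegral

private lemma ebs_expInt (ω c a b : ℝ) (hω : ω ≠ 0) :
    ∫ s in a..b, Real.exp (ω * (s - c)) =
      (Real.exp (ω * (b - c)) - Real.exp (ω * (a - c))) / ω := by
  have h : ∀ s : ℝ, HasDerivAt (fun u => Real.exp (ω * (u - c)) / ω)
      (Real.exp (ω * (s - c))) s := by
    intro s
    have h1 : HasDerivAt (fun u : ℝ => ω * (u - c)) ω s := by
      simpa using ((hasDerivAt_id s).sub_const c).const_mul ω
    have h2 := h1.exp.div_const ω
    have h3 : Real.exp (ω * (s - c)) * ω / ω = Real.exp (ω * (s - c)) := by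
      field_simp
    rw [h3] at h2
    exact h2
  have hcont : Continuous fun s : ℝ => Real.exp (ω * (s - c)) :=
    Real.continuous_exp.comp (continuous_const.mul (continuous_id.sub continuous_const))
  rw [intervalIntegral.integral_eq_sub_of_hasDerivAt (fun s _ => h s)
    (hcont.intervalIntegrable a b)]
  ring

private lemma ebs_cramer {A B F0 F1 D m M kE : ℝ} (hm : 0 < m) (hmD : m ≤ |D|)
    (hA : |A| ≤ kE) (hB : |B| ≤ kE) (hF0 : |F0| ≤ M) (hF1 : |F1| ≤ M) (hM : 0 ≤ M) :
    |(A * F1 - B * F0) / D| ≤ 2 * M * kE / m := by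
  have hkE : 0 ≤ kE := le_trans (abs_nonneg _) hA
  have hnum : |A * F1 - B * F0| ≤ kE * M + kE * M := by
    calc |A * F1 - B * F0| ≤ |A * F1| + |B * F0| := abs_sub _ _
      _ = |A| * |F1| + |B| * |F0| := by rw [abs_mul, abs_mul]
      _ ≤ kE * M + kE * M :=
        add_le_add (mul_le_mul hA hF1 (abs_nonneg _) hkE)
          (mul_le_mul hB hF0 (abs_nonneg _) hkE)
  rw [abs_div]
  calc |A * F1 - B * F0| / |D| ≤ (kE * M + kE * M) / m :=
        div_le_div₀ (by positivity) hnum hm hmD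
    _ = 2 * M * kE / m := by ring

private lemma ebs_key1 {ω : ℝ} (hω : 0 < ω) {a b : ℝ} (hab : a ≤ b) {h : ℝ → ℝ}
    (hc : Continuous h) {C : ℝ}
    (hC : ∀ s ∈ Set.Icc a b, |h s| ≤ C * Real.exp (ω * (s - b))) :
    |∫ s in a..b, h s| ≤ C / ω := by
  have hC0 : 0 ≤ C := by
    have h1 := hC b ⟨hab, le_rfl⟩
    rw [sub_self, mul_zero, Real.exp_zero, mul_one] at h1
    exact le_trans (abs_nonneg _) h1
  have hcont : Continuous fun s : ℝ => C * Real.exp (ω * (s - b)) :=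
    continuous_const.mul
      (Real.continuous_exp.comp (continuous_const.mul (continuous_id.sub continuous_const)))
  calc |∫ s in a..b, h s| ≤ ∫ s in a..b, |h s| :=
        intervalIntegral.abs_integral_le_integral_abs hab
    _ ≤ ∫ s in a..b, C * Real.exp (ω * (s - b)) :=
        intervalIntegral.integral_mono_on hab (hc.abs.intervalIntegrable a b)
          (hcont.intervalIntegrable a b) hC
    _ = C * ((Real.exp (ω * (b - b)) - Real.exp (ω * (a - b))) / ω) := by
        rw [intervalIntegral.integral_const_mul, ebs_expInt ω b a b hω.ne']
    _ ≤ C / ω := by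
        rw [sub_self, mul_zero, Real.exp_zero]
        have h1 : C * ((1 - Real.exp (ω * (a - b))) / ω)
            = C / ω - C * Real.exp (ω * (a - b)) / ω := by ring
        have h2 : 0 ≤ C * Real.exp (ω * (a - b)) / ω := by positivity
        linarith

private lemma ebs_key2 {ω : ℝ} (hω : 0 < ω) {a b : ℝ} (hab : a ≤ b) {h : ℝ → ℝ}
    (hc : Continuous h) {C : ℝ}
    (hC : ∀ s ∈ Set.Icc a b, |h s| ≤ C * Real.exp (ω * (a - s))) :
    |∫ s in a..b, h s| ≤ C / ω := by
  have hC0 : 0 ≤ C := by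
    have h1 := hC a ⟨le_rfl, hab⟩
    rw [sub_self, mul_zero, Real.exp_zero, mul_one] at h1
    exact le_trans (abs_nonneg _) h1
  have he : ∀ s : ℝ, ω * (a - s) = -ω * (s - a) := fun s => by ring
  have hcont : Continuous fun s : ℝ => C * Real.exp (ω * (a - s)) :=
    continuous_const.mul
      (Real.continuous_exp.comp (continuous_const.mul (continuous_const.sub continuous_id)))
  calc |∫ s in a..b, h s| ≤ ∫ s in a..b, |h s| :=
        intervalIntegral.abs_integral_le_integral_abs hab
    _ ≤ ∫ s in a..b, C * Real.exp (ω * (a - s)) :=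
        intervalIntegral.integral_mono_on hab (hc.abs.intervalIntegrable a b)
          (hcont.intervalIntegrable a b) hC
    _ = C * ((Real.exp (-ω * (b - a)) - Real.exp (-ω * (a - a))) / (-ω)) := by
        simp only [he]
        rw [intervalIntegral.integral_const_mul,
          ebs_expInt (-ω) a a b (neg_ne_zero.mpr hω.ne')]
    _ ≤ C / ω := by
        rw [sub_self, mul_zero, Real.exp_zero]
        have h1 : C * ((Real.exp (-ω * (b - a)) - 1) / (-ω))
            = C / ω - C * Real.exp (-ω * (b - a)) / ω := by
          rw [div_neg]
          ring
        have h2 : 0 ≤ C * Real.exp (-ω * (b - a)) / ω := by positivity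
        linarith

private lemma ebs_intIci {ω : ℝ} (hω : 0 < ω) (t : ℝ) :
    MeasureTheory.IntegrableOn (fun s => Real.exp (-(ω * (s - t)))) (Set.Ici t) := by
  have h : (fun s : ℝ => Real.exp (-(ω * (s - t)))) =
      fun s => Real.exp (ω * t) * Real.exp (-(ω * s)) := by
    funext s; rw [← Real.exp_add]; ring_nf
  rw [h]
  apply Iff.mpr integrableOn_Ici_iff_integrableOn_Ioi
  have h2 := exp_neg_integrableOn_Ioi t hω
  simp only [neg_mul] at h2
  exact h2.const_mul _

private lemma ebs_valIci {ω : ℝ} (hω : 0 < ω) (t : ℝ) :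
    ∫ s in Set.Ici t, Real.exp (-(ω * (s - t))) = 1 / ω := by
  rw [MeasureTheory.integral_Ici_eq_integral_Ioi]
  have h : ∀ s : ℝ, Real.exp (-(ω * (s - t))) = Real.exp (ω * t) * Real.exp (-(ω * s)) := by
    intro s; rw [← Real.exp_add]; ring_nf
  simp only [h]
  rw [MeasureTheory.integral_const_mul]
  have h2 := integral_comp_mul_left_Ioi (fun x => Real.exp (-x)) t hω
  simp only [smul_eq_mul] at h2
  rw [h2, integral_exp_neg_Ioi]
  rw [show Real.exp (ω * t) * (ω⁻¹ * Real.exp (-(ω * t)))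
      = Real.exp (ω * t) * Real.exp (-(ω * t)) * ω⁻¹ from by ring,
    ← Real.exp_add, add_neg_cancel, Real.exp_zero, one_mul, one_div]

private lemma ebs_intIio {ω : ℝ} (hω : 0 < ω) (t : ℝ) :
    MeasureTheory.IntegrableOn (fun s => Real.exp (ω * (s - t))) (Set.Iio t) := by
  have A : MeasurableEmbedding fun x : ℝ => -x :=
    (Homeomorph.neg ℝ).measurableEmbedding
  unfold MeasureTheory.IntegrableOn
  rw [← Measure.map_neg_eq_self (volume : Measure ℝ)]
  rw [MeasurableEmbedding.restrict_map A]
  rw [A.integrable_map_iff]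
  have h : ((fun s => Real.exp (ω * (s - t))) ∘ fun x : ℝ => -x) =
      fun x : ℝ => Real.exp (-(ω * t)) * Real.exp (-(ω * x)) := by
    funext x
    simp only [Function.comp_apply, ← Real.exp_add]
    ring_nf
  rw [h]
  have h2 : (fun x : ℝ => -x) ⁻¹' Set.Iio t = Set.Ioi (-t) := by
    ext x; simp [neg_lt]
  rw [h2]
  have h3 := exp_neg_integrableOn_Ioi (-t) hω
  simp only [neg_mul] at h3
  exact h3.const_mul _

private lemma ebs_valIio {ω : ℝ} (hω : 0 < ω) (t : ℝ) :
    ∫ s in Set.Iio t, Real.exp (ω * (s - t)) = 1 / ω := by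
  rw [MeasureTheory.setIntegral_congr_set MeasureTheory.Iio_ae_eq_Iic]
  have h2 := integral_comp_neg_Iic t (fun y => Real.exp (ω * (-y - t)))
  simp only [neg_neg] at h2
  rw [h2]
  have h : ∀ x : ℝ, Real.exp (ω * (-x - t)) = Real.exp (-(ω * t)) * Real.exp (-(ω * x)) := by
    intro x; rw [← Real.exp_add]; ring_nf
  simp only [h]
  rw [MeasureTheory.integral_const_mul]
  have h3 := integral_comp_mul_left_Ioi (fun x => Real.exp (-x)) (-t) hω
  simp only [smul_eq_mul] at h3
  rw [h3, integral_exp_neg_Ioi]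
  rw [show -(ω * -t) = ω * t from by ring]
  rw [show Real.exp (-(ω * t)) * (ω⁻¹ * Real.exp (ω * t))
      = Real.exp (-(ω * t)) * Real.exp (ω * t) * ω⁻¹ from by ring,
    ← Real.exp_add, neg_add_cancel, Real.exp_zero, one_mul, one_div]

/-- Under the bounded-solution criterion (`∫_ℝ (1/Δ) f(γ) ∧ F = 0` and the
dichotomy estimates), the explicit variation-of-constants formula
`z_j(t) = γ_j'(t)(x₂ − ∫₀ᵗ (ζ/Δ) ∧ F) + ζ_j(t)·∫_{−∞}^t (γ'/Δ) ∧ F`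
defines a bounded solution of `ż − Df(γ(t))z = F(t)`. -/
theorem explicit_bounded_solution
    (f : (Fin 2 → ℝ) → (Fin 2 → ℝ)) (hf : ContDiff ℝ 2 f)
    (ω : ℝ) (hω : ω > 0)
    (γ : ℝ → Fin 2 → ℝ) (hγ : ∀ t, HasDerivAt γ (f (γ t)) t)
    (ζ : ℝ → Fin 2 → ℝ)
    (hζ : ∀ t, HasDerivAt ζ (fderiv ℝ f (γ t) (ζ t)) t)
    (Δ : ℝ → ℝ)
    (hΔdef : ∀ t, Δ t = deriv γ t 0 * ζ t 1 - deriv γ t 1 * ζ t 0)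
    (hΔ : ∃ m > 0, ∀ t, m ≤ |Δ t|)
    (hdich : ∃ k > 0, ∀ (i j : Fin 2) (t s : ℝ),
      (0 ≤ s → s ≤ t → |deriv γ t i * ζ s j| < k * Real.exp (-(ω * (t - s)))) ∧
      (t ≤ s → s ≤ 0 → |deriv γ t i * ζ s j| < k * Real.exp (ω * (t - s))))
    (F : ℝ → Fin 2 → ℝ) (hFc : Continuous F) (hFb : ∃ M, ∀ t, ‖F t‖ ≤ M)
    (hcrit : ∫ s, (1 / Δ s) * (f (γ s) 0 * F s 1 - f (γ s) 1 * F s 0) = 0)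
    (x₂ : ℝ)
    (z : ℝ → Fin 2 → ℝ)
    (hz : ∀ t j, z t j =
      deriv γ t j *
        (x₂ - ∫ s in (0 : ℝ)..t, (ζ s 0 * F s 1 - ζ s 1 * F s 0) / Δ s) +
      ζ t j *
        ∫ s in Set.Iio t, (deriv γ s 0 * F s 1 - deriv γ s 1 * F s 0) / Δ s) :
    (∀ t, HasDerivAt z (fderiv ℝ f (γ t) (z t) + F t) t) ∧
    ∃ M, ∀ t, ‖z t‖ ≤ M := by
  obtain ⟨m, hm, hmΔ⟩ := hΔ
  obtain ⟨k, hk, hdich⟩ := hdich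
  obtain ⟨M, hM⟩ := hFb
  have hM0 : 0 ≤ M := le_trans (norm_nonneg _) (hM 0)
  have hγd : ∀ t, deriv γ t = f (γ t) := fun t => (hγ t).deriv
  have hfd : Differentiable ℝ f := hf.differentiable (by norm_num)
  have hγc : Continuous γ := by
    rw [continuous_iff_continuousAt]; exact fun t => (hγ t).continuousAt
  have hgc : Continuous (deriv γ) := by
    have h : deriv γ = fun t => f (γ t) := funext hγd
    rw [h]; exact hfd.continuous.comp hγc
  have hζc : Continuous ζ := by
    rw [continuous_iff_continuousAt]; exact fun t => (hζ t).continuousAt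
  have hΔc : Continuous Δ := by
    have h : Δ = fun t => deriv γ t 0 * ζ t 1 - deriv γ t 1 * ζ t 0 := funext hΔdef
    rw [h]
    exact (((continuous_apply (0 : Fin 2)).comp hgc).mul
      ((continuous_apply (1 : Fin 2)).comp hζc)).sub
      (((continuous_apply (1 : Fin 2)).comp hgc).mul
        ((continuous_apply (0 : Fin 2)).comp hζc))
  have hΔne : ∀ t, Δ t ≠ 0 := by
    intro t h
    have h1 := hmΔ t; rw [h, abs_zero] at h1; linarith
  have hFib : ∀ (t : ℝ) (i : Fin 2), |F t i| ≤ M := fun t i =>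
    le_trans (by simpa [Real.norm_eq_abs] using norm_le_pi_norm (F t) i) (hM t)
  have hFic : ∀ i : Fin 2, Continuous fun t => F t i := fun i => (continuous_apply i).comp hFc
  set ψ : ℝ → ℝ := fun s => (ζ s 0 * F s 1 - ζ s 1 * F s 0) / Δ s with hψ
  set φ : ℝ → ℝ := fun s => (deriv γ s 0 * F s 1 - deriv γ s 1 * F s 0) / Δ s with hφ
  have hψc : Continuous ψ :=
    ((((continuous_apply (0 : Fin 2)).comp hζc).mul (hFic 1)).sub
      (((continuous_apply (1 : Fin 2)).comp hζc).mul (hFic 0))).div hΔc hΔne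
  have hφc : Continuous φ :=
    ((((continuous_apply (0 : Fin 2)).comp hgc).mul (hFic 1)).sub
      (((continuous_apply (1 : Fin 2)).comp hgc).mul (hFic 0))).div hΔc hΔne
  -- a nonzero component of ζ at time 0
  have hζ0 : ∃ j : Fin 2, ζ 0 j ≠ 0 := by
    by_contra h; push_neg at h
    apply hΔne 0; rw [hΔdef 0, h 0, h 1]; ring
  obtain ⟨j₀, hj₀⟩ := hζ0
  have hc0 : 0 < |ζ 0 j₀| := abs_pos.mpr hj₀
  -- exponential decay of deriv γ
  have gdecay : ∀ (t : ℝ) (i : Fin 2),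
      |deriv γ t i| ≤ k / |ζ 0 j₀| * Real.exp (-(ω * |t|)) := by
    intro t i
    rcases le_total 0 t with ht | ht
    · have h1 := ((hdich i j₀ t 0).1 le_rfl ht).le
      rw [abs_mul] at h1
      rw [abs_of_nonneg ht]
      calc |deriv γ t i| = |deriv γ t i| * |ζ 0 j₀| / |ζ 0 j₀| := by field_simp
        _ ≤ k * Real.exp (-(ω * (t - 0))) / |ζ 0 j₀| := by gcongr
        _ = k / |ζ 0 j₀| * Real.exp (-(ω * t)) := by rw [sub_zero]; ring
    · have h1 := ((hdich i j₀ t 0).2 ht le_rfl).le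
      rw [abs_mul] at h1
      rw [abs_of_nonpos ht]
      calc |deriv γ t i| = |deriv γ t i| * |ζ 0 j₀| / |ζ 0 j₀| := by field_simp
        _ ≤ k * Real.exp (ω * (t - 0)) / |ζ 0 j₀| := by gcongr
        _ = k / |ζ 0 j₀| * Real.exp (-(ω * -t)) := by
            rw [sub_zero, show -(ω * -t) = ω * t from by ring]; ring
  have gbd : ∀ (t : ℝ) (i : Fin 2), |deriv γ t i| ≤ k / |ζ 0 j₀| := by
    intro t i
    refine le_trans (gdecay t i) ?_
    have h1 : Real.exp (-(ω * |t|)) ≤ 1 := by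
      rw [Real.exp_le_one_iff]
      have : 0 ≤ ω * |t| := by positivity
      linarith
    calc k / |ζ 0 j₀| * Real.exp (-(ω * |t|)) ≤ k / |ζ 0 j₀| * 1 := by
          apply mul_le_mul_of_nonneg_left h1 (by positivity)
      _ = k / |ζ 0 j₀| := mul_one _
  -- global bound and integrability of φ
  have φbd : ∀ s : ℝ, |φ s| ≤ 2 * M * (k / |ζ 0 j₀|) / m * Real.exp (-(ω * |s|)) := by
    intro s
    refine le_trans (ebs_cramer hm (hmΔ s) (gdecay s 0) (gdecay s 1)
      (hFib s 0) (hFib s 1) hM0) (le_of_eq (by ring))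
  have expabs_int : MeasureTheory.Integrable (fun s : ℝ => Real.exp (-(ω * |s|))) := by
    have h1 : MeasureTheory.IntegrableOn (fun s : ℝ => Real.exp (-(ω * |s|)))
        (Set.Iic (0 : ℝ)) := by
      apply Iff.mpr integrableOn_Iic_iff_integrableOn_Iio
      apply (ebs_intIio hω 0).congr_fun _ measurableSet_Iio
      intro s hs
      show Real.exp (ω * (s - 0)) = Real.exp (-(ω * |s|))
      rw [abs_of_nonpos (le_of_lt hs)]
      congr 1; ring
    have h2 : MeasureTheory.IntegrableOn (fun s : ℝ => Real.exp (-(ω * |s|)))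
        (Set.Ioi (0 : ℝ)) := by
      have h3 := exp_neg_integrableOn_Ioi 0 hω
      apply h3.congr_fun _ measurableSet_Ioi
      intro s hs
      show Real.exp (-ω * s) = Real.exp (-(ω * |s|))
      rw [abs_of_pos hs]
      congr 1; ring
    have h4 := h1.union h2
    rw [Set.Iic_union_Ioi] at h4
    exact MeasureTheory.integrableOn_univ.mp h4
  have φint : MeasureTheory.Integrable φ := by
    apply MeasureTheory.Integrable.mono'
      (expabs_int.const_mul (2 * M * (k / |ζ 0 j₀|) / m)) hφc.aestronglyMeasurable
    refine MeasureTheory.ae_of_all _ fun s => ?_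
    rw [Real.norm_eq_abs]
    exact φbd s
  -- the criterion in terms of φ
  have hcrit0 : ∫ s, φ s = 0 := by
    rw [← hcrit]
    apply MeasureTheory.integral_congr_ae (MeasureTheory.ae_of_all _ fun s => ?_)
    rw [hφ]
    simp only
    rw [← hγd s]
    ring
  -- abbreviations
  set H : ℝ → ℝ := fun u => ∫ s in Set.Iio u, φ s with hH
  set G : ℝ → ℝ := fun u => ∫ s in (0 : ℝ)..u, ψ s with hG
  have hz' : ∀ u i, z u i = deriv γ u i * (x₂ - G u) + ζ u i * H u := by
    intro u i; simp only [hG, hH]; exact hz u i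
  have hGd : ∀ t, HasDerivAt G (ψ t) t := by
    intro t
    rw [hG]
    exact intervalIntegral.integral_hasDerivAt_right (hψc.intervalIntegrable _ _)
      (hψc.stronglyMeasurableAtFilter _ _) hψc.continuousAt
  have hHsplit : ∀ u, H u = H 0 + ∫ s in (0 : ℝ)..u, φ s := by
    intro u
    simp only [hH]
    rw [MeasureTheory.setIntegral_congr_set MeasureTheory.Iio_ae_eq_Iic,
      MeasureTheory.setIntegral_congr_set (MeasureTheory.Iio_ae_eq_Iic (a := (0 : ℝ)))]
    have h1 := integral_Iic_sub_Iic (φint.integrableOn (s := Set.Iic 0))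
      (φint.integrableOn (s := Set.Iic u))
    linarith
  have hHd : ∀ t, HasDerivAt H (φ t) t := by
    intro t
    have h : H = fun u => H 0 + ∫ s in (0 : ℝ)..u, φ s := funext hHsplit
    rw [h]
    simpa using (hasDerivAt_const t (H 0)).fun_add
      (intervalIntegral.integral_hasDerivAt_right (hφc.intervalIntegrable 0 t)
        (hφc.stronglyMeasurableAtFilter _ _) hφc.continuousAt)
  constructor
  · -- z solves the ODE
    intro t
    apply hasDerivAt_pi.mpr
    intro j
    have hzfun : (fun u => z u j) = fun u => deriv γ u j * (x₂ - G u) + ζ u j * H u :=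
      funext fun u => hz' u j
    rw [hzfun]
    have hDg : HasDerivAt (fun u => deriv γ u j) (fderiv ℝ f (γ t) (deriv γ t) j) t := by
      have h1 : HasDerivAt (fun u => f (γ u)) (fderiv ℝ f (γ t) (f (γ t))) t :=
        (hfd (γ t)).hasFDerivAt.comp_hasDerivAt t (hγ t)
      have h3 := hasDerivAt_pi.mp h1 j
      rw [show (fun u => f (γ u) j) = fun u => deriv γ u j from
        funext fun u => by rw [hγd u], ← hγd t] at h3
      exact h3
    have hDζj : HasDerivAt (fun u => ζ u j) (fderiv ℝ f (γ t) (ζ t) j) t :=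
      hasDerivAt_pi.mp (hζ t) j
    have hd := (hDg.fun_mul ((hasDerivAt_const t x₂).fun_sub (hGd t))).fun_add (hDζj.fun_mul (hHd t))
    convert hd using 1
    have hzt : z t = (x₂ - G t) • deriv γ t + H t • ζ t := by
      funext i
      rw [hz' t i]
      simp only [Pi.add_apply, Pi.smul_apply, smul_eq_mul]
      ring
    rw [Pi.add_apply, hzt, map_add, (fderiv ℝ f (γ t)).map_smul, (fderiv ℝ f (γ t)).map_smul]
    rw [Pi.add_apply, Pi.smul_apply, Pi.smul_apply, smul_eq_mul, smul_eq_mul]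
    have hcram : F t j = deriv γ t j * (0 - ψ t) + ζ t j * φ t := by
      simp only [hψ, hφ]
      have hD := hΔne t
      field_simp
      rw [hΔdef t]
      fin_cases j <;> simp only [Fin.mk_zero, Fin.mk_one, Fin.isValue] <;> ring
    rw [hcram]
    ring
  · -- boundedness
    refine ⟨k / |ζ 0 j₀| * |x₂| + 2 * M * k / m / ω + 2 * M * k / m / ω, ?_⟩
    intro t
    have hB0 : (0 : ℝ) ≤ k / |ζ 0 j₀| * |x₂| + 2 * M * k / m / ω + 2 * M * k / m / ω := by
      positivity
    rw [pi_norm_le_iff_of_nonneg hB0]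
    intro j
    rw [Real.norm_eq_abs]
    have h1 : |deriv γ t j * x₂| ≤ k / |ζ 0 j₀| * |x₂| := by
      rw [abs_mul]; exact mul_le_mul_of_nonneg_right (gbd t j) (abs_nonneg _)
    have h2 : |deriv γ t j * G t| ≤ 2 * M * k / m / ω := by
      rcases le_total 0 t with ht | ht
      · have hGt : deriv γ t j * G t = ∫ s in (0 : ℝ)..t, deriv γ t j * ψ s := by
          simp only [hG]; exact (intervalIntegral.integral_const_mul _ _).symm
        rw [hGt]
        apply ebs_key1 hω ht (continuous_const.fun_mul hψc)
        intro s hs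
        have hE : Real.exp (-(ω * (t - s))) = Real.exp (ω * (s - t)) := by congr 1; ring
        have hA := ((hdich j 0 t s).1 hs.1 hs.2).le
        have hB := ((hdich j 1 t s).1 hs.1 hs.2).le
        rw [hE] at hA hB
        rw [show deriv γ t j * ψ s =
          ((deriv γ t j * ζ s 0) * F s 1 - (deriv γ t j * ζ s 1) * F s 0) / Δ s from by
            simp only [hψ]; ring]
        exact le_trans (ebs_cramer hm (hmΔ s) hA hB (hFib s 0) (hFib s 1) hM0)
          (le_of_eq (by ring))
      · have hGt : deriv γ t j * G t = -∫ s in t..(0 : ℝ), deriv γ t j * ψ s := by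
          simp only [hG]
          rw [intervalIntegral.integral_symm t 0, intervalIntegral.integral_const_mul]
          ring
        rw [hGt, abs_neg]
        apply ebs_key2 hω ht (continuous_const.fun_mul hψc)
        intro s hs
        have hA := ((hdich j 0 t s).2 hs.1 hs.2).le
        have hB := ((hdich j 1 t s).2 hs.1 hs.2).le
        rw [show deriv γ t j * ψ s =
          ((deriv γ t j * ζ s 0) * F s 1 - (deriv γ t j * ζ s 1) * F s 0) / Δ s from by
            simp only [hψ]; ring]
        exact le_trans (ebs_cramer hm (hmΔ s) hA hB (hFib s 0) (hFib s 1) hM0)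
          (le_of_eq (by ring))
    have h3 : |ζ t j * H t| ≤ 2 * M * k / m / ω := by
      rcases le_total t 0 with ht | ht
      · have hHt : ζ t j * H t = ∫ s in Set.Iio t, ζ t j * φ s := by
          simp only [hH]; exact (MeasureTheory.integral_const_mul _ _).symm
        rw [hHt]
        calc |∫ s in Set.Iio t, ζ t j * φ s| ≤ ∫ s in Set.Iio t, |ζ t j * φ s| := by
              simpa [Real.norm_eq_abs, abs_mul] using
                MeasureTheory.norm_integral_le_integral_norm
                  (μ := volume.restrict (Set.Iio t)) (fun s => ζ t j * φ s)
          _ ≤ ∫ s in Set.Iio t, 2 * M * k / m * Real.exp (ω * (s - t)) := by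
              apply MeasureTheory.setIntegral_mono_on
                ((φint.const_mul _).abs.integrableOn)
                ((ebs_intIio hω t).const_mul _) measurableSet_Iio
              intro s hs
              have hs' : s ≤ t := le_of_lt hs
              have hA := ((hdich 0 j s t).2 hs' ht).le
              have hB := ((hdich 1 j s t).2 hs' ht).le
              rw [show ζ t j * φ s =
                ((deriv γ s 0 * ζ t j) * F s 1 - (deriv γ s 1 * ζ t j) * F s 0) / Δ s from by
                  simp only [hφ]; ring]
              exact le_trans (ebs_cramer hm (hmΔ s) hA hB (hFib s 0) (hFib s 1) hM0)
                (le_of_eq (by ring))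
          _ = 2 * M * k / m * (1 / ω) := by
              rw [MeasureTheory.integral_const_mul, ebs_valIio hω t]
          _ = 2 * M * k / m / ω := by ring
      · have hneg : H t = -∫ s in Set.Ici t, φ s := by
          have h4 := integral_Iio_add_Ici
            (φint.integrableOn (s := Set.Iio t)) (φint.integrableOn (s := Set.Ici t))
          rw [hcrit0] at h4
          simp only [hH]
          linarith
        have hHt : ζ t j * H t = -∫ s in Set.Ici t, ζ t j * φ s := by
          rw [hneg, MeasureTheory.integral_const_mul]; ring
        rw [hHt, abs_neg]
        calc |∫ s in Set.Ici t, ζ t j * φ s| ≤ ∫ s in Set.Ici t, |ζ t j * φ s| := by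
              simpa [Real.norm_eq_abs, abs_mul] using
                MeasureTheory.norm_integral_le_integral_norm
                  (μ := volume.restrict (Set.Ici t)) (fun s => ζ t j * φ s)
          _ ≤ ∫ s in Set.Ici t, 2 * M * k / m * Real.exp (-(ω * (s - t))) := by
              apply MeasureTheory.setIntegral_mono_on
                ((φint.const_mul _).abs.integrableOn)
                ((ebs_intIci hω t).const_mul _) measurableSet_Ici
              intro s hs
              have hs' : t ≤ s := hs
              have hA := ((hdich 0 j s t).1 ht hs').le
              have hB := ((hdich 1 j s t).1 ht hs').le
              rw [show ζ t j * φ s =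
                ((deriv γ s 0 * ζ t j) * F s 1 - (deriv γ s 1 * ζ t j) * F s 0) / Δ s from by
                  simp only [hφ]; ring]
              exact le_trans (ebs_cramer hm (hmΔ s) hA hB (hFib s 0) (hFib s 1) hM0)
                (le_of_eq (by ring))
          _ = 2 * M * k / m * (1 / ω) := by
              rw [MeasureTheory.integral_const_mul, ebs_valIci hω t]
          _ = 2 * M * k / m / ω := by ring
    calc |z t j| = |deriv γ t j * x₂ - deriv γ t j * G t + ζ t j * H t| := by
          rw [hz' t j]; congr 1; ring
      _ ≤ |deriv γ t j * x₂ - deriv γ t j * G t| + |ζ t j * H t| := abs_add_le _ _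
      _ ≤ |deriv γ t j * x₂| + |deriv γ t j * G t| + |ζ t j * H t| := by
          have := abs_sub (deriv γ t j * x₂) (deriv γ t j * G t)
          linarith
      _ ≤ k / |ζ 0 j₀| * |x₂| + 2 * M * k / m / ω + 2 * M * k / m / ω := by
          linarith
end

section
/- Let L : C¹_b(ℝ,ℝ²) → C⁰_b(ℝ,ℝ²) be defined by (Lz)(t) = ż(t) − A(t)z(t) with A(t) = Df(γ(t)) as above. Then the kernel of L equals {ξ·γ'(·) : ξ ∈ ℝ}, a one-dimensional subspace. -/
private lemma comp_deriv {z : ℝ → Fin 2 → ℝ} {v : Fin 2 → ℝ} {t : ℝ}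
    (h : HasDerivAt z v t) (i : Fin 2) : HasDerivAt (fun s => z s i) (v i) t :=
  (ContinuousLinearMap.proj (R := ℝ) (φ := fun _ : Fin 2 => ℝ) i).hasFDerivAt.comp_hasDerivAt t h

private lemma wronskian_trace (A : (Fin 2 → ℝ) →L[ℝ] (Fin 2 → ℝ)) (u v : Fin 2 → ℝ) :
    A u 0 * v 1 + u 0 * A v 1 - (A u 1 * v 0 + u 1 * A v 0)
      = (A (Pi.single 0 1) 0 + A (Pi.single 1 1) 1) * (u 0 * v 1 - u 1 * v 0) := by
  have hu : ∀ w : Fin 2 → ℝ,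
      A w = w 0 • A (Pi.single 0 1) + w 1 • A (Pi.single 1 1) := by
    intro w
    have hw : w = w 0 • (Pi.single 0 1 : Fin 2 → ℝ) + w 1 • (Pi.single 1 1 : Fin 2 → ℝ) := by
      funext i; fin_cases i <;> simp [Pi.single_apply]
    conv_lhs => rw [hw]
    simp
  rw [hu u, hu v]
  simp only [Pi.add_apply, Pi.smul_apply, smul_eq_mul]
  ring

private lemma ratio_const {N D c : ℝ → ℝ}
    (hN : ∀ t, HasDerivAt N (c t * N t) t)
    (hD : ∀ t, HasDerivAt D (c t * D t) t)
    (hD0 : ∀ t, D t ≠ 0) (s t : ℝ) : N s / D s = N t / D t := by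
  have h : ∀ x, HasDerivAt (fun y => N y / D y) 0 x := by
    intro x
    have h2 := (hN x).div (hD x) (hD0 x)
    rw [show c x * N x * D x - N x * (c x * D x) = 0 by ring, zero_div] at h2
    exact h2
  exact is_const_of_deriv_eq_zero (fun x => (h x).differentiableAt)
    (fun x => (h x).deriv) s t

/-- The kernel of `L : C¹_b → C⁰_b`, `(Lz)(t) = ż(t) − Df(γ(t))z(t)`, along a
homoclinic orbit `γ` whose second independent variational solution `ζ` is
unbounded, is exactly the one-dimensional space `{ξ·γ'(·) : ξ ∈ ℝ}`. -/
theorem kernel_of_variational_operator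
    (f : (Fin 2 → ℝ) → (Fin 2 → ℝ)) (hf : ContDiff ℝ 2 f)
    (γ : ℝ → Fin 2 → ℝ) (hγ : ∀ t, HasDerivAt γ (f (γ t)) t)
    (hγ'b : ∃ M, ∀ t, ‖deriv γ t‖ ≤ M)
    (ζ : ℝ → Fin 2 → ℝ)
    (hζ : ∀ t, HasDerivAt ζ (fderiv ℝ f (γ t) (ζ t)) t)
    (hζub : ¬ ∃ M, ∀ t, ‖ζ t‖ ≤ M)
    (hindep : ∀ t, deriv γ t 0 * ζ t 1 - deriv γ t 1 * ζ t 0 ≠ 0) :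
    (∀ z : ℝ → Fin 2 → ℝ,
        (∀ t, HasDerivAt z (fderiv ℝ f (γ t) (z t)) t) →
        (∃ M, ∀ t, ‖z t‖ ≤ M) →
        ∃ ξ : ℝ, z = fun t => ξ • deriv γ t) ∧
    (∀ ξ : ℝ,
        (∀ t, HasDerivAt (fun s => ξ • deriv γ s)
          (fderiv ℝ f (γ t) (ξ • deriv γ t)) t) ∧
        ∃ M, ∀ t, ‖ξ • deriv γ t‖ ≤ M) := by
  have hderiv : ∀ t, deriv γ t = f (γ t) := fun t => (hγ t).deriv
  set g : ℝ → Fin 2 → ℝ := fun t => f (γ t) with hg_def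
  -- g satisfies the variational equation
  have hg : ∀ t, HasDerivAt g (fderiv ℝ f (γ t) (g t)) t := by
    intro t
    exact ((hf.differentiable (by norm_num) (γ t)).hasFDerivAt).comp_hasDerivAt t (hγ t)
  obtain ⟨M, hM⟩ := hγ'b
  have hMg : ∀ t, ‖g t‖ ≤ M := by
    intro t
    show ‖f (γ t)‖ ≤ M
    rw [← hderiv t]; exact hM t
  set c : ℝ → ℝ := fun t =>
    fderiv ℝ f (γ t) (Pi.single 0 1) 0 + fderiv ℝ f (γ t) (Pi.single 1 1) 1 with hc_def
  -- Wronskian of two solutions satisfies W' = c W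
  have wr : ∀ (u v : ℝ → Fin 2 → ℝ),
      (∀ t, HasDerivAt u (fderiv ℝ f (γ t) (u t)) t) →
      (∀ t, HasDerivAt v (fderiv ℝ f (γ t) (v t)) t) →
      ∀ t, HasDerivAt (fun s => u s 0 * v s 1 - u s 1 * v s 0)
        (c t * (u t 0 * v t 1 - u t 1 * v t 0)) t := by
    intro u v hu hv t
    have h1 := ((comp_deriv (hu t) 0).mul (comp_deriv (hv t) 1)).sub
      ((comp_deriv (hu t) 1).mul (comp_deriv (hv t) 0))
    rw [show c t * (u t 0 * v t 1 - u t 1 * v t 0) = _ from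
      (wronskian_trace (fderiv ℝ f (γ t)) (u t) (v t)).symm]
    exact h1
  have hD0 : ∀ t, g t 0 * ζ t 1 - g t 1 * ζ t 0 ≠ 0 := by
    intro t
    have h := hindep t
    rwa [hderiv t] at h
  have hDd := wr g ζ hg hζ
  constructor
  · intro z hz ⟨Mz, hMz⟩
    obtain ⟨a, ha⟩ : ∃ a, ∀ t,
        z t 0 * ζ t 1 - z t 1 * ζ t 0 = a * (g t 0 * ζ t 1 - g t 1 * ζ t 0) := by
      refine ⟨(z 0 0 * ζ 0 1 - z 0 1 * ζ 0 0) / (g 0 0 * ζ 0 1 - g 0 1 * ζ 0 0), fun t => ?_⟩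
      have h := ratio_const (wr z ζ hz hζ) hDd hD0 t 0
      rw [div_eq_iff (hD0 t)] at h
      exact h
    obtain ⟨b, hb⟩ : ∃ b, ∀ t,
        g t 0 * z t 1 - g t 1 * z t 0 = b * (g t 0 * ζ t 1 - g t 1 * ζ t 0) := by
      refine ⟨(g 0 0 * z 0 1 - g 0 1 * z 0 0) / (g 0 0 * ζ 0 1 - g 0 1 * ζ 0 0), fun t => ?_⟩
      have h := ratio_const (wr g z hg hz) hDd hD0 t 0
      rw [div_eq_iff (hD0 t)] at h
      exact h
    -- pointwise decomposition z = a g + b ζ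
    have hzpt : ∀ t, z t = a • g t + b • ζ t := by
      intro t
      have h1 := ha t
      have h2 := hb t
      have hD := hD0 t
      have e0 : z t 0 = a * g t 0 + b * ζ t 0 :=
        mul_left_cancel₀ hD (by linear_combination g t 0 * h1 + ζ t 0 * h2)
      have e1 : z t 1 = a * g t 1 + b * ζ t 1 :=
        mul_left_cancel₀ hD (by linear_combination g t 1 * h1 + ζ t 1 * h2)
      funext i
      fin_cases i
      · exact e0
      · exact e1
    -- b = 0 since ζ is unbounded
    have hb0 : b = 0 := by
      by_contra hb0
      apply hζub
      refine ⟨|b⁻¹| * (Mz + |a| * M), fun t => ?_⟩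
      have hζeq : ζ t = b⁻¹ • (z t - a • g t) := by
        rw [hzpt t]
        funext i
        simp only [Pi.smul_apply, Pi.add_apply, Pi.sub_apply, smul_eq_mul]
        field_simp
        ring
      rw [hζeq, norm_smul, Real.norm_eq_abs]
      refine mul_le_mul_of_nonneg_left ?_ (abs_nonneg _)
      calc ‖z t - a • g t‖ ≤ ‖z t‖ + ‖a • g t‖ := norm_sub_le _ _
        _ ≤ Mz + |a| * M := by
            refine add_le_add (hMz t) ?_
            rw [norm_smul, Real.norm_eq_abs]
            exact mul_le_mul_of_nonneg_left (hMg t) (abs_nonneg _)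
    refine ⟨a, ?_⟩
    funext t
    rw [hderiv t]
    rw [hzpt t, hb0]
    simp
    rfl
  · intro ξ
    constructor
    · intro t
      have heq : (fun s => ξ • deriv γ s) = fun s => ξ • g s := by
        funext s; rw [hderiv s]
      rw [heq]
      have h1 := (hg t).const_smul ξ
      rw [map_smul, hderiv t]
      exact h1
    · refine ⟨|ξ| * M, fun t => ?_⟩
      rw [norm_smul, Real.norm_eq_abs]
      exact mul_le_mul_of_nonneg_left (hM t) (abs_nonneg _)
end
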